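/- arXiv:2502.09510 — 7 statements merged into one kernel-verified Lean document; each statement's English description precedes it below -/
import Mathlib

section
/- Let f : ℝ → ℂ be a Schwartz function that is even, i.e., f(−t) = f(t) for all t ∈ ℝ. Then Zf(1/2 + k, 1/2 + l) = 0 for all integers k, l. -/
/-- The Zak transform `Zf(x,ω) = ∑_{k∈ℤ} f(k−x) e^{2πikω}`. -/
noncomputable def zak (f : ℝ → ℂ) (x ω : ℝ) : ℂ :=
  ∑' k : ℤ, f ((k : ℝ) - x) * Complex.exp (2 * Real.pi * Complex.I * (k : ℂ) * (ω : ℂ))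

lemma exp_half_int (l n : ℤ) :
    Complex.exp (2 * Real.pi * Complex.I * (n : ℂ) * ((1 / 2 + (l : ℝ) : ℝ) : ℂ))
      = (-1 : ℂ) ^ n := by
  have h : (2 * Real.pi * Complex.I * (n : ℂ) * ((1 / 2 + (l : ℝ) : ℝ) : ℂ))
      = (n : ℂ) * (Real.pi * Complex.I) + ((n * l : ℤ) : ℂ) * (2 * Real.pi * Complex.I) := by
    push_cast
    ring
  rw [h, Complex.exp_add, Complex.exp_int_mul_two_pi_mul_I, mul_one,
    Complex.exp_int_mul, Complex.exp_pi_mul_I]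

lemma neg_one_zpow_sub (a n : ℤ) : (-1 : ℂ) ^ (2 * a + 1 - n) = -(-1 : ℂ) ^ n := by
  have h1 : (-1 : ℂ) ≠ 0 := by norm_num
  rw [zpow_sub₀ h1, zpow_add₀ h1, zpow_mul]
  norm_num
  rcases Int.even_or_odd n with he | ho
  · rw [he.neg_one_zpow]; norm_num
  · rw [ho.neg_one_zpow]; norm_num

/-- If `f` is an even Schwartz function, then `Zf(1/2 + k, 1/2 + l) = 0` for all integers. -/
theorem zak_zero_of_even (f : SchwartzMap ℝ ℂ) (heven : ∀ t : ℝ, f (-t) = f t) (k l : ℤ) :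
    zak f (1 / 2 + (k : ℝ)) (1 / 2 + (l : ℝ)) = 0 := by
  unfold zak
  have hc : ∀ n : ℤ, f ((n : ℝ) - (1 / 2 + (k : ℝ))) *
      Complex.exp (2 * Real.pi * Complex.I * (n : ℂ) * ((1 / 2 + (l : ℝ) : ℝ) : ℂ))
      = f ((n : ℝ) - (1 / 2 + (k : ℝ))) * (-1 : ℂ) ^ n := fun n => by
    rw [exp_half_int]
  rw [tsum_congr hc]
  set g : ℤ → ℂ := fun n => f ((n : ℝ) - (1 / 2 + (k : ℝ))) * (-1 : ℂ) ^ n with hg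
  have key : ∀ n : ℤ, g ((Equiv.subLeft (2 * k + 1)) n) = -g n := by
    intro n
    simp only [Equiv.subLeft_apply, hg]
    have harg : ((2 * k + 1 - n : ℤ) : ℝ) - (1 / 2 + (k : ℝ))
        = -((n : ℝ) - (1 / 2 + (k : ℝ))) := by push_cast; ring
    rw [harg, heven, neg_one_zpow_sub]
    ring
  have h1 := (Equiv.subLeft (2 * k + 1)).tsum_eq g
  have h2 : ∑' n : ℤ, g ((Equiv.subLeft (2 * k + 1)) n) = -∑' n : ℤ, g n := by
    rw [tsum_congr key, tsum_neg]
  exact add_self_eq_zero.mp (eq_neg_iff_add_eq_zero.mp (h1.symm.trans h2))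
end

section
/- Let f : ℝ → ℂ be a Schwartz function that is odd, i.e., f(−t) = −f(t) for all t ∈ ℝ. Then Zf(k, l) = 0, Zf(1/2 + k, l) = 0, and Zf(k, 1/2 + l) = 0 for all integers k, l. -/
lemma tsum_zero_of_antisymm (g : ℤ → ℂ) (c : ℤ) (h : ∀ n, g (c - n) = -g n) :
    ∑' n, g n = 0 := by
  have h1 : ∑' n, g n = -∑' n, g n := by
    calc ∑' n, g n = ∑' n, g ((Equiv.subLeft c) n) := ((Equiv.subLeft c).tsum_eq g).symm
      _ = ∑' n, -g n := by
          refine tsum_congr fun n => ?_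
          simpa [Equiv.subLeft] using h n
      _ = -∑' n, g n := tsum_neg
  linear_combination ((1:ℂ)/2) * h1

/-- If `f` is an odd Schwartz function, then `Zf(k, l) = Zf(1/2 + k, l) = Zf(k, 1/2 + l) = 0`
for all integers `k, l`. -/
theorem zak_zero_of_odd (f : SchwartzMap ℝ ℂ) (hodd : ∀ t : ℝ, f (-t) = -f t) (k l : ℤ) :
    zak f (k : ℝ) (l : ℝ) = 0 ∧
    zak f (1 / 2 + (k : ℝ)) (l : ℝ) = 0 ∧
    zak f (k : ℝ) (1 / 2 + (l : ℝ)) = 0 := by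
  refine ⟨?_, ?_, ?_⟩
  · apply tsum_zero_of_antisymm _ (2 * k)
    intro n
    have hf : f (((2 * k - n : ℤ) : ℝ) - (k : ℝ)) = -f (((n : ℤ) : ℝ) - (k : ℝ)) := by
      have : ((2 * k - n : ℤ) : ℝ) - (k : ℝ) = -(((n : ℤ) : ℝ) - (k : ℝ)) := by push_cast; ring
      rw [this, hodd]
    have he : ∀ m : ℤ, Complex.exp (2 * Real.pi * Complex.I * (m : ℂ) * ((l : ℝ) : ℂ)) = 1 := by
      intro m
      have : 2 * (Real.pi : ℂ) * Complex.I * (m : ℂ) * ((l : ℝ) : ℂ)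
          = ((m * l : ℤ) : ℂ) * (2 * Real.pi * Complex.I) := by push_cast; ring
      rw [this, Complex.exp_int_mul_two_pi_mul_I]
    simp only [hf, he, mul_one, neg_mul]
  · apply tsum_zero_of_antisymm _ (2 * k + 1)
    intro n
    have hf : f (((2 * k + 1 - n : ℤ) : ℝ) - (1 / 2 + (k : ℝ)))
        = -f (((n : ℤ) : ℝ) - (1 / 2 + (k : ℝ))) := by
      have : ((2 * k + 1 - n : ℤ) : ℝ) - (1 / 2 + (k : ℝ))
          = -(((n : ℤ) : ℝ) - (1 / 2 + (k : ℝ))) := by push_cast; ring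
      rw [this, hodd]
    have he : ∀ m : ℤ, Complex.exp (2 * Real.pi * Complex.I * (m : ℂ) * ((l : ℝ) : ℂ)) = 1 := by
      intro m
      have : 2 * (Real.pi : ℂ) * Complex.I * (m : ℂ) * ((l : ℝ) : ℂ)
          = ((m * l : ℤ) : ℂ) * (2 * Real.pi * Complex.I) := by push_cast; ring
      rw [this, Complex.exp_int_mul_two_pi_mul_I]
    simp only [hf, he, mul_one, neg_mul]
  · apply tsum_zero_of_antisymm _ (2 * k)
    intro n
    have hf : f (((2 * k - n : ℤ) : ℝ) - (k : ℝ)) = -f (((n : ℤ) : ℝ) - (k : ℝ)) := by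
      have : ((2 * k - n : ℤ) : ℝ) - (k : ℝ) = -(((n : ℤ) : ℝ) - (k : ℝ)) := by push_cast; ring
      rw [this, hodd]
    have he : Complex.exp (2 * Real.pi * Complex.I * ((2 * k - n : ℤ) : ℂ) * ((1 / 2 + (l : ℝ) : ℝ) : ℂ))
        = Complex.exp (2 * Real.pi * Complex.I * ((n : ℤ) : ℂ) * ((1 / 2 + (l : ℝ) : ℝ) : ℂ)) := by
      have : 2 * (Real.pi : ℂ) * Complex.I * ((2 * k - n : ℤ) : ℂ) * ((1 / 2 + (l : ℝ) : ℝ) : ℂ)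
          = 2 * Real.pi * Complex.I * ((n : ℤ) : ℂ) * ((1 / 2 + (l : ℝ) : ℝ) : ℂ)
            + (((k - n) * (2 * l + 1) : ℤ) : ℂ) * (2 * Real.pi * Complex.I) := by
        push_cast; ring
      rw [this, Complex.exp_add, Complex.exp_int_mul_two_pi_mul_I, mul_one]
    rw [hf, he, neg_mul]
end

section
/- Let g : ℝ → ℂ be a Schwartz function and let z_1, …, z_M ∈ [0,1)² be distinct points such that Zg(z_m) = 0 for every m = 1, …, M. Then the Gabor system 𝒢(g, Γ) with Γ = ⋃_{m=1}^M ((ℤ×ℤ) + z_m) is not a frame for L²(ℝ). -/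
/-- Time-frequency shift: `(π(x,ω)g)(t) = e^{2πiωt} g(t−x)`. -/
noncomputable def tfShift (z : ℝ × ℝ) (g : ℝ → ℂ) : ℝ → ℂ :=
  fun t => Complex.exp (2 * Real.pi * Complex.I * (z.2 : ℂ) * (t : ℂ)) * g (t - z.1)

/-- Gabor coefficient `⟨f, π(γ)g⟩ = ∫_ℝ f(t) conj((π(γ)g)(t)) dt`. -/
noncomputable def gaborCoef (g f : ℝ → ℂ) (γ : ℝ × ℝ) : ℂ :=
  ∫ t : ℝ, f t * (starRingEnd ℂ) (tfShift γ g t)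

/-- `𝒢(g, Γ)` is a frame for `L²(ℝ)`: there exist `0 < A ≤ B < ∞` with
`A‖f‖² ≤ ∑_{γ∈Γ} |⟨f, π(γ)g⟩|² ≤ B‖f‖²` for all `f ∈ L²(ℝ)`. -/
def IsGaborFrame (g : ℝ → ℂ) (Γ : Set (ℝ × ℝ)) : Prop :=
  ∃ A B : ℝ, 0 < A ∧ A ≤ B ∧
    ∀ f : ℝ → ℂ, MeasureTheory.MemLp f 2 MeasureTheory.volume →
      A * ∫ t : ℝ, ‖f t‖ ^ 2 ≤ ∑' γ : Γ, ‖gaborCoef g f γ‖ ^ 2 ∧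
      ∑' γ : Γ, ‖gaborCoef g f γ‖ ^ 2 ≤ B * ∫ t : ℝ, ‖f t‖ ^ 2

/-- The shifted integer lattice `(ℤ×ℤ) + z ⊆ ℝ²`. -/
def intLatticeShift (z : ℝ × ℝ) : Set (ℝ × ℝ) :=
  Set.range fun kl : ℤ × ℤ => ((kl.1 : ℝ) + z.1, (kl.2 : ℝ) + z.2)

/-- The unit square `[0,1)²`. -/
def unitSquare : Set (ℝ × ℝ) := Set.Ico (0 : ℝ) 1 ×ˢ Set.Ico (0 : ℝ) 1


open MeasureTheory Complex Set Function

namespace GNF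

noncomputable def Vf (C : ℝ) : ℤ → ℝ := fun p => 32*C/(1+(p:ℝ)^4)

noncomputable def tB (C : ℝ) (d : ℕ) : ℝ := ∑' p : ℤ, if (d:ℤ) ≤ |p| then Vf C p else 0

lemma aux_pos (t : ℝ) : 0 < 1 + t^4 := by positivity

lemma trans_bound {C : ℝ} (hC0 : 0 ≤ C) {t a : ℝ} (h : |t - a| ≤ 1) :
    C/(1+t^4) ≤ 32*C/(1+a^4) := by
  rw [div_le_div_iff₀ (aux_pos t) (aux_pos a)]
  have h1 : (t-a)^2 ≤ 1 := by
    have := abs_le.mp h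
    nlinarith [this.1, this.2]
  have hu4 : (t-a)^4 ≤ 1 := by nlinarith [sq_nonneg (t-a)]
  have h2 : a^2 ≤ 2*t^2 + 2*(t-a)^2 := by nlinarith [sq_nonneg (t + (t-a))]
  have h4 : a^4 ≤ (2*t^2 + 2*(t-a)^2)^2 := by
    have := pow_le_pow_left₀ (sq_nonneg a) h2 2
    calc a^4 = (a^2)^2 := by ring
    _ ≤ (2*t^2 + 2*(t-a)^2)^2 := this
  have key : 1 + a^4 ≤ 32*(1+t^4) := by nlinarith [sq_nonneg (t^2 - (t-a)^2)]
  nlinarith [key, hC0, aux_pos t]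

lemma Vf_nonneg {C : ℝ} (hC0 : 0 ≤ C) (p : ℤ) : 0 ≤ Vf C p := by
  unfold Vf; positivity

lemma sum_shift_sq : Summable (fun n : ℕ => (1:ℝ)/((n:ℝ)+1)^2) := by
  have h := (Real.summable_one_div_nat_pow (p := 2)).mpr (by norm_num)
  have h2 := (summable_nat_add_iff 1).mpr h
  refine h2.congr fun n => ?_
  push_cast
  ring

lemma sum_shift_qt : Summable (fun n : ℕ => (1:ℝ)/((n:ℝ)+1)^4) := by
  have h := (Real.summable_one_div_nat_pow (p := 4)).mpr (by norm_num)
  have h2 := (summable_nat_add_iff 1).mpr h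
  refine h2.congr fun n => ?_
  push_cast
  ring

lemma summable_nat_one_add_sq : Summable (fun n : ℕ => (1:ℝ)/(1+(n:ℝ)^2)) := by
  refine Summable.of_nonneg_of_le (fun n => by positivity) (fun n => ?_) (sum_shift_sq.mul_left 4)
  rw [mul_one_div, div_le_div_iff₀ (by positivity) (by positivity)]
  nlinarith [sq_nonneg ((n:ℝ) - 1), sq_nonneg (n:ℝ)]

lemma summable_nat_one_add_qt : Summable (fun n : ℕ => (1:ℝ)/(1+(n:ℝ)^4)) := by
  refine Summable.of_nonneg_of_le (fun n => by positivity) (fun n => ?_) (sum_shift_qt.mul_left 8)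
  rw [mul_one_div, div_le_div_iff₀ (by positivity) (by positivity)]
  have hx : (0:ℝ) ≤ (n:ℝ) := Nat.cast_nonneg n
  nlinarith [mul_nonneg (sq_nonneg ((n:ℝ)-1)) (show (0:ℝ) ≤ 7*(n:ℝ)^2+10*(n:ℝ)+7 by positivity)]

lemma int_summable_of_nat {f : ℤ → ℝ} (h1 : Summable (fun n : ℕ => f n))
    (h2 : Summable (fun n : ℕ => f (-(n:ℤ)))) : Summable f :=
  Summable.of_nat_of_neg h1 h2

lemma summable_int_one_add_sq : Summable (fun p : ℤ => (1:ℝ)/(1+(p:ℝ)^2)) := by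
  refine Summable.of_nat_of_neg ?_ ?_
  · exact summable_nat_one_add_sq.congr fun n => by push_cast; ring
  · exact summable_nat_one_add_sq.congr fun n => by push_cast; ring_nf
lemma summable_int_one_add_qt : Summable (fun p : ℤ => (1:ℝ)/(1+(p:ℝ)^4)) := by
  refine Summable.of_nat_of_neg ?_ ?_
  · exact summable_nat_one_add_qt.congr fun n => by push_cast; ring
  · exact summable_nat_one_add_qt.congr fun n => by push_cast; ring_nf

lemma summable_Vf {C : ℝ} : Summable (Vf C) := by
  have := (summable_int_one_add_qt).mul_left (32*C)
  refine this.congr fun p => ?_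
  unfold Vf
  rw [mul_one_div]

lemma summable_tB_term {C : ℝ} (hC0 : 0 ≤ C) (d : ℕ) :
    Summable (fun p : ℤ => if (d:ℤ) ≤ |p| then Vf C p else 0) := by
  refine Summable.of_nonneg_of_le (fun p => ?_) (fun p => ?_) (summable_Vf (C := C))
  · split <;> simp [Vf_nonneg hC0]
  · split <;> simp [Vf_nonneg hC0]

lemma tB_nonneg {C : ℝ} (hC0 : 0 ≤ C) (d : ℕ) : 0 ≤ tB C d := by
  refine tsum_nonneg fun p => ?_
  split <;> simp [Vf_nonneg hC0]



noncomputable def S2 : ℝ := ∑' p : ℤ, 1/(1+(p:ℝ)^2)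

noncomputable def S4 : ℝ := ∑' q : ℕ, 1/((q:ℝ)+1)^4

noncomputable def Theta (C : ℝ) : ℝ := (64*C*S2)^2 * S4

lemma S2_nonneg : 0 ≤ S2 := tsum_nonneg fun p => by positivity
lemma S4_nonneg : 0 ≤ S4 := tsum_nonneg fun p => by positivity
lemma Theta_nonneg (C : ℝ) : 0 ≤ Theta C := mul_nonneg (sq_nonneg _) S4_nonneg

lemma tB_le {C : ℝ} (hC0 : 0 ≤ C) {d : ℕ} (hd : 1 ≤ d) :
    tB C d ≤ 64*C*S2/(d:ℝ)^2 := by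
  have hd0 : (0:ℝ) < (d:ℝ) := by exact_mod_cast hd
  have hsum2 : Summable (fun p : ℤ => 64*C/(d:ℝ)^2 * (1/(1+(p:ℝ)^2))) :=
    summable_int_one_add_sq.mul_left _
  have hle : ∀ p : ℤ, (if (d:ℤ) ≤ |p| then Vf C p else 0) ≤ 64*C/(d:ℝ)^2 * (1/(1+(p:ℝ)^2)) := by
    intro p
    split
    · rename_i hp
      have hp' : (d:ℝ) ≤ |(p:ℝ)| := by exact_mod_cast (le_trans (le_of_eq rfl) hp)
      have hp2 : (d:ℝ)^2 ≤ (p:ℝ)^2 := by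
        have h := pow_le_pow_left₀ (by positivity : (0:ℝ) ≤ (d:ℝ)) hp' 2
        rwa [_root_.sq_abs] at h
      unfold Vf
      rw [show 64*C/(d:ℝ)^2 * (1/(1+(p:ℝ)^2)) = 64*C/((d:ℝ)^2*(1+(p:ℝ)^2)) from by
        rw [div_mul_div_comm, mul_one]]
      rw [div_le_div_iff₀ (aux_pos _) (by positivity)]
      nlinarith [sq_nonneg ((p:ℝ)^2-1), sq_nonneg (p:ℝ), hd0, hC0,
        mul_le_mul_of_nonneg_right hp2 (show (0:ℝ) ≤ 1+(p:ℝ)^2 by positivity),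
        mul_le_mul_of_nonneg_left (show (d:ℝ)^2*(1+(p:ℝ)^2) ≤ 2*(1+(p:ℝ)^4) from by
          nlinarith [sq_nonneg ((p:ℝ)^2-1),
            mul_le_mul_of_nonneg_right hp2 (show (0:ℝ) ≤ 1+(p:ℝ)^2 by positivity)]) hC0]
    · positivity
  have := Summable.tsum_le_tsum hle (summable_tB_term hC0 d) hsum2
  refine le_trans this ?_
  rw [tsum_mul_left]
  rw [show 64*C*S2/(d:ℝ)^2 = 64*C/(d:ℝ)^2 * S2 from by ring]
  rfl

lemma summable_tB_sq {C : ℝ} (hC0 : 0 ≤ C) : Summable (fun q : ℕ => tB C (q+1)^2) := by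
  have hmaj : Summable (fun q : ℕ => (64*C*S2)^2 * (1/((q:ℝ)+1)^4)) := sum_shift_qt.mul_left _
  refine Summable.of_nonneg_of_le (fun q => sq_nonneg _) (fun q => ?_) hmaj
  have h1 : tB C (q+1) ≤ 64*C*S2/((q:ℝ)+1)^2 := by
    have := tB_le hC0 (d := q+1) (by omega)
    simpa [Nat.cast_add] using this
  have h2 : tB C (q+1)^2 ≤ (64*C*S2/((q:ℝ)+1)^2)^2 :=
    pow_le_pow_left₀ (tB_nonneg hC0 _) h1 2
  refine le_trans h2 (le_of_eq ?_)
  rw [div_pow]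
  ring

lemma tsum_tB_sq_le {C : ℝ} (hC0 : 0 ≤ C) : ∑' q : ℕ, tB C (q+1)^2 ≤ Theta C := by
  have hmaj : Summable (fun q : ℕ => (64*C*S2)^2 * (1/((q:ℝ)+1)^4)) := sum_shift_qt.mul_left _
  have hle : ∀ q : ℕ, tB C (q+1)^2 ≤ (64*C*S2)^2 * (1/((q:ℝ)+1)^4) := by
    intro q
    have h1 : tB C (q+1) ≤ 64*C*S2/((q:ℝ)+1)^2 := by
      have := tB_le hC0 (d := q+1) (by omega)
      simpa [Nat.cast_add] using this
    have h2 : tB C (q+1)^2 ≤ (64*C*S2/((q:ℝ)+1)^2)^2 :=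
      pow_le_pow_left₀ (tB_nonneg hC0 _) h1 2
    refine le_trans h2 (le_of_eq ?_)
    rw [div_pow]
    ring
  refine le_trans (Summable.tsum_le_tsum hle (summable_tB_sq hC0) hmaj) ?_
  rw [tsum_mul_left, Theta]
  exact mul_le_mul_of_nonneg_left le_rfl (sq_nonneg _)

lemma sum_reflect_le {C : ℝ} (hC0 : 0 ≤ C) (n : ℕ) :
    ∑ q ∈ Finset.range (n+1), tB C (n+1-q)^2 ≤ Theta C := by
  have hrefl : ∑ q ∈ Finset.range (n+1), tB C (n+1-q)^2
      = ∑ q ∈ Finset.range (n+1), tB C (q+1)^2 := by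
    have := Finset.sum_range_reflect (fun j => tB C (j+1)^2) (n+1)
    refine Eq.trans ?_ this
    refine Finset.sum_congr rfl fun q hq => ?_
    have hq' : q ≤ n := by simpa [Nat.lt_succ_iff] using hq
    congr 2
    omega
  rw [hrefl]
  refine le_trans (Summable.sum_le_tsum _ (fun q _ => sq_nonneg _) (summable_tB_sq hC0)) (tsum_tB_sq_le hC0)

/-- the majorant sequence -/
noncomputable def beta (C L δ : ℝ) (n : ℕ) (q : ℕ) : ℝ :=
  if q ≤ n then L*δ + tB C (n+1-q) else tB C (q-n)

lemma beta_nonneg {C L δ : ℝ} (hC0 : 0 ≤ C) (hL : 0 ≤ L) (hδ : 0 ≤ δ) (n q : ℕ) :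
    0 ≤ beta C L δ n q := by
  unfold beta
  split
  · have := tB_nonneg hC0 (n+1-q); positivity
  · exact tB_nonneg hC0 _

lemma summable_beta_sq {C L δ : ℝ} (hC0 : 0 ≤ C) (n : ℕ) :
    Summable (fun q : ℕ => beta C L δ n q ^ 2) := by
  rw [← summable_nat_add_iff (n+1)]
  refine (summable_tB_sq hC0).congr fun q => ?_
  unfold beta
  rw [if_neg (by omega)]
  congr 2
  omega

lemma summable_beta_natAbs {C L δ : ℝ} (hC0 : 0 ≤ C) (n : ℕ) :
    Summable (fun k : ℤ => beta C L δ n k.natAbs ^ 2) := by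
  refine Summable.of_nat_of_neg ?_ ?_
  · exact (summable_beta_sq (L := L) (δ := δ) hC0 n).congr fun q => by simp
  · exact (summable_beta_sq (L := L) (δ := δ) hC0 n).congr fun q => by simp

lemma tsum_beta_sq_le {C L δ : ℝ} (hC0 : 0 ≤ C) (hL : 0 ≤ L) (hδ : 0 ≤ δ) (n : ℕ) :
    ∑' q : ℕ, beta C L δ n q ^ 2 ≤ 2*((n:ℝ)+1)*(L*δ)^2 + 3 * Theta C := by
  have hsum := summable_beta_sq (L := L) (δ := δ) hC0 n
  have hsplit := Summable.sum_add_tsum_nat_add (f := fun q : ℕ => beta C L δ n q ^ 2) (n+1) hsum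
  rw [← hsplit]
  have h1 : ∑ q ∈ Finset.range (n+1), beta C L δ n q ^ 2
      ≤ 2*((n:ℝ)+1)*(L*δ)^2 + 2 * Theta C := by
    have hterm : ∀ q ∈ Finset.range (n+1),
        beta C L δ n q ^ 2 ≤ 2*(L*δ)^2 + 2 * tB C (n+1-q)^2 := by
      intro q hq
      have hq' : q ≤ n := by simpa [Nat.lt_succ_iff] using hq
      unfold beta
      rw [if_pos hq']
      nlinarith [sq_nonneg (L*δ - tB C (n+1-q))]
    refine le_trans (Finset.sum_le_sum hterm) ?_
    rw [Finset.sum_add_distrib, Finset.sum_const, Finset.card_range, ← Finset.mul_sum]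
    have hcard : ((n+1) : ℕ) • (2*(L*δ)^2) = 2*((n:ℝ)+1)*(L*δ)^2 := by
      rw [nsmul_eq_mul]
      push_cast
      ring
    rw [hcard]
    have h2 : 2 * ∑ q ∈ Finset.range (n+1), tB C (n+1-q)^2 ≤ 2 * Theta C := by
      have := sum_reflect_le (C := C) hC0 n
      linarith
    linarith
  have h2 : ∑' q : ℕ, beta C L δ n (q + (n+1)) ^ 2 ≤ Theta C := by
    have heq : ∀ q : ℕ, beta C L δ n (q + (n+1)) ^ 2 = tB C (q+1)^2 := by
      intro q
      unfold beta
      rw [if_neg (by omega)]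
      congr 2
      omega
    calc ∑' q : ℕ, beta C L δ n (q + (n+1)) ^ 2 = ∑' q : ℕ, tB C (q+1)^2 :=
          tsum_congr heq
    _ ≤ Theta C := tsum_tB_sq_le hC0
  linarith

lemma tsum_beta_natAbs_le {C L δ : ℝ} (hC0 : 0 ≤ C) (hL : 0 ≤ L) (hδ : 0 ≤ δ) (n : ℕ) :
    ∑' k : ℤ, beta C L δ n k.natAbs ^ 2 ≤ 4*((n:ℝ)+1)*(L*δ)^2 + 6 * Theta C := by
  have h1 : Summable (fun q : ℕ => beta C L δ n ((q:ℤ)).natAbs ^ 2) :=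
    (summable_beta_sq (L := L) (δ := δ) hC0 n).congr fun q => by simp
  have h2 : Summable (fun q : ℕ => beta C L δ n ((-(q:ℤ))).natAbs ^ 2) :=
    (summable_beta_sq (L := L) (δ := δ) hC0 n).congr fun q => by simp
  have := Summable.tsum_of_nat_of_neg (f := fun k : ℤ => beta C L δ n k.natAbs ^ 2) h1 h2
  rw [this]
  beta_reduce
  have e1 : ∑' q : ℕ, beta C L δ n ((q:ℤ)).natAbs ^ 2 = ∑' q : ℕ, beta C L δ n q ^ 2 :=
    tsum_congr fun q => by simp
  have e2 : ∑' q : ℕ, beta C L δ n ((-(q:ℤ))).natAbs ^ 2 = ∑' q : ℕ, beta C L δ n q ^ 2 :=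
    tsum_congr fun q => by simp
  rw [e1, e2]
  simp only [Int.natAbs_zero]
  have hb := tsum_beta_sq_le (L := L) (δ := δ) hC0 hL hδ n
  have h0 : 0 ≤ beta C L δ n 0 ^ 2 := sq_nonneg _
  linarith

/-! ### Schwartz decay -/

lemma schwartz_pt (h : SchwartzMap ℝ ℂ) : ∃ C, 0 < C ∧ ∀ t : ℝ, ‖h t‖ ≤ C/(1+t^4) := by
  obtain ⟨C0, hC0, h0⟩ := h.decay 0 0
  obtain ⟨C4, hC4, h4⟩ := h.decay 4 0
  refine ⟨C0 + C4, by linarith, fun t => ?_⟩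
  have e0 := h0 t
  have e4 := h4 t
  rw [norm_iteratedFDeriv_zero] at e0 e4
  simp only [pow_zero, one_mul] at e0
  have habs : ‖t‖^4 = t^4 := by
    rw [Real.norm_eq_abs, ← _root_.abs_pow, _root_.abs_of_nonneg (by positivity : (0:ℝ) ≤ t^4)]
  rw [habs] at e4
  rw [le_div_iff₀ (aux_pos t)]
  nlinarith [norm_nonneg (h t)]

lemma schwartz_decay (g : SchwartzMap ℝ ℂ) :
    ∃ C, 0 < C ∧ ∀ t : ℝ, ‖g t‖ ≤ C/(1+t^4) ∧ ‖deriv (⇑g) t‖ ≤ C/(1+t^4) := by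
  obtain ⟨C1, hC1, h1⟩ := schwartz_pt g
  obtain ⟨C2, hC2, h2⟩ := schwartz_pt (SchwartzMap.derivCLM ℝ ℂ g)
  refine ⟨max C1 C2, lt_max_of_lt_left hC1, fun t => ⟨?_, ?_⟩⟩
  · exact le_trans (h1 t) (div_le_div_of_nonneg_right (le_max_left C1 C2) (le_of_lt (aux_pos t)))
  · have : ‖deriv (⇑g) t‖ = ‖((SchwartzMap.derivCLM ℝ ℂ) g) t‖ := by
      rw [SchwartzMap.derivCLM_apply]
    rw [this]
    exact le_trans (h2 t) (div_le_div_of_nonneg_right (le_max_right C1 C2) (le_of_lt (aux_pos t)))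

/-! ### Norm and phase helpers -/

lemma norm_exp_eq_one {w : ℂ} (hw : w.re = 0) : ‖cexp w‖ = 1 := by
  rw [Complex.norm_exp, hw, Real.exp_zero]

lemma norm_tf (g : ℝ → ℂ) (a ω t : ℝ) :
    ‖(starRingEnd ℂ) (tfShift (a, ω) g t)‖ = ‖g (t-a)‖ := by
  rw [starRingEnd_apply, norm_star]
  unfold tfShift
  rw [norm_mul, norm_exp_eq_one (by simp), one_mul]

/-! ### The full sum equals the Zak transform -/

lemma norm_full_sum (g : ℝ → ℂ) (x ω s : ℝ) (k : ℤ) :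
    ‖∑' j : ℤ, (starRingEnd ℂ) (tfShift ((k:ℝ)+x, ω) g (s+(j:ℝ)))‖
      = ‖zak g (x-s) ω‖ := by
  set F : ℤ → ℂ := fun j => (starRingEnd ℂ) (tfShift ((k:ℝ)+x, ω) g (s+(j:ℝ))) with hF
  set E : ℂ := cexp (2*(Real.pi:ℂ)*I*(ω:ℂ)*((s:ℂ)+(k:ℂ))) with hE
  have h1 : ∀ p : ℤ, F ((Equiv.addRight k) p)
      = (starRingEnd ℂ) E * (starRingEnd ℂ)
          (g ((p:ℝ) - (x-s)) * cexp (2*(Real.pi:ℂ)*I*(p:ℂ)*(ω:ℂ))) := by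
    intro p
    simp only [Equiv.coe_addRight, hF]
    rw [← map_mul]
    unfold tfShift
    congr 1
    have harg : s + ((p+k : ℤ):ℝ) - (((k:ℝ)+x, ω).1) = (p:ℝ) - (x-s) := by
      push_cast; ring
    rw [harg]
    rw [show E * (g ((p:ℝ) - (x-s)) * cexp (2*(Real.pi:ℂ)*I*(p:ℂ)*(ω:ℂ)))
        = (E * cexp (2*(Real.pi:ℂ)*I*(p:ℂ)*(ω:ℂ))) * g ((p:ℝ) - (x-s)) from by ring]
    rw [hE, ← Complex.exp_add]
    congr 2
    push_cast
    ring
  calc ‖∑' j : ℤ, F j‖ = ‖∑' p : ℤ, F ((Equiv.addRight k) p)‖ := by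
        rw [Equiv.tsum_eq (Equiv.addRight k) F]
  _ = ‖(starRingEnd ℂ) E * ∑' p : ℤ, (starRingEnd ℂ)
        (g ((p:ℝ) - (x-s)) * cexp (2*(Real.pi:ℂ)*I*(p:ℂ)*(ω:ℂ)))‖ := by
        rw [tsum_congr h1, tsum_mul_left]
  _ = ‖∑' p : ℤ, (starRingEnd ℂ) (g ((p:ℝ) - (x-s)) * cexp (2*(Real.pi:ℂ)*I*(p:ℂ)*(ω:ℂ)))‖ := by
        rw [norm_mul, starRingEnd_apply, norm_star, hE, norm_exp_eq_one (by simp), one_mul]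
  _ = ‖(starRingEnd ℂ) (∑' p : ℤ, g ((p:ℝ) - (x-s)) * cexp (2*(Real.pi:ℂ)*I*(p:ℂ)*(ω:ℂ)))‖ := by
        simp only [starRingEnd_apply]
        rw [tsum_star]
  _ = ‖zak g (x-s) ω‖ := by
        rw [starRingEnd_apply, norm_star]
        rfl

/-! ### Zak transform smallness near a zero -/

lemma sum_g_term (g : SchwartzMap ℝ ℂ) {C : ℝ} (hC0 : 0 ≤ C)
    (hdec : ∀ t : ℝ, ‖g t‖ ≤ C/(1+t^4)) {u : ℝ} (hu : |u| ≤ 1) (ω : ℝ) :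
    Summable (fun p : ℤ => (⇑g) ((p:ℝ) - u) * cexp (2*(Real.pi:ℂ)*I*(p:ℂ)*(ω:ℂ))) := by
  refine Summable.of_norm ?_
  refine Summable.of_nonneg_of_le (fun p => norm_nonneg _) (fun p => ?_) (summable_Vf (C := C))
  rw [norm_mul, norm_exp_eq_one (by simp), mul_one]
  refine le_trans (hdec _) (trans_bound hC0 ?_)
  rw [show (p:ℝ) - u - (p:ℝ) = -u from by ring, abs_neg]
  exact hu

lemma zak_small (g : SchwartzMap ℝ ℂ) {C : ℝ} (hC : 0 < C)
    (hdec : ∀ t : ℝ, ‖g t‖ ≤ C/(1+t^4) ∧ ‖deriv (⇑g) t‖ ≤ C/(1+t^4))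
    {x ω s : ℝ} (hx0 : 0 ≤ x) (hx1 : x < 1) (hzero : zak (⇑g) x ω = 0)
    (hs0 : 0 ≤ s) (hs1 : s ≤ 1) :
    ‖zak (⇑g) (x-s) ω‖ ≤ (∑' k : ℤ, Vf C k) * s := by
  have hxs : |x - s| ≤ 1 := abs_le.mpr ⟨by linarith, by linarith⟩
  have hxx : |x| ≤ 1 := abs_le.mpr ⟨by linarith, by linarith⟩
  have hs1' : Summable (fun p : ℤ => (⇑g) ((p:ℝ) - (x-s)) * cexp (2*(Real.pi:ℂ)*I*(p:ℂ)*(ω:ℂ))) :=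
    sum_g_term g hC.le (fun t => (hdec t).1) hxs ω
  have hs2' : Summable (fun p : ℤ => (⇑g) ((p:ℝ) - x) * cexp (2*(Real.pi:ℂ)*I*(p:ℂ)*(ω:ℂ))) :=
    sum_g_term g hC.le (fun t => (hdec t).1) hxx ω
  have hdiff : zak (⇑g) (x-s) ω = ∑' p : ℤ,
      ((⇑g) ((p:ℝ) - (x-s)) - (⇑g) ((p:ℝ) - x)) * cexp (2*(Real.pi:ℂ)*I*(p:ℂ)*(ω:ℂ)) := by
    have : zak (⇑g) (x-s) ω = zak (⇑g) (x-s) ω - zak (⇑g) x ω := by rw [hzero, sub_zero]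
    rw [this]
    unfold zak
    rw [← Summable.tsum_sub hs1' hs2']
    refine tsum_congr fun p => ?_
    ring
  rw [hdiff]
  have hbd : ∀ p : ℤ, ‖((⇑g) ((p:ℝ) - (x-s)) - (⇑g) ((p:ℝ) - x))
        * cexp (2*(Real.pi:ℂ)*I*(p:ℂ)*(ω:ℂ))‖ ≤ Vf C p * s := by
    intro p
    rw [norm_mul, norm_exp_eq_one (by simp), mul_one]
    have hderb : ∀ y ∈ Icc ((p:ℝ) - x) ((p:ℝ) - x + s), ‖deriv (⇑g) y‖ ≤ Vf C p := by
      intro y hy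
      refine le_trans (hdec y).2 (trans_bound hC.le ?_)
      obtain ⟨hy1, hy2⟩ := hy
      rw [abs_le]
      exact ⟨by linarith, by linarith⟩
    have hmvt := Convex.norm_image_sub_le_of_norm_deriv_le (f := ⇑g)
      (fun y _ => g.differentiable.differentiableAt) hderb (convex_Icc _ _)
      (Set.left_mem_Icc.mpr (by linarith)) (Set.right_mem_Icc.mpr (by linarith))
    have harg : (p:ℝ) - (x - s) = (p:ℝ) - x + s := by ring
    rw [harg]
    refine le_trans hmvt (le_of_eq ?_)
    rw [show (p:ℝ) - x + s - ((p:ℝ) - x) = s from by ring, Real.norm_eq_abs,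
      _root_.abs_of_nonneg hs0]
  have hsn : Summable (fun p : ℤ => ‖((⇑g) ((p:ℝ) - (x-s)) - (⇑g) ((p:ℝ) - x))
      * cexp (2*(Real.pi:ℂ)*I*(p:ℂ)*(ω:ℂ))‖) := by
    refine Summable.of_nonneg_of_le (fun p => norm_nonneg _) hbd ?_
    exact (summable_Vf (C := C)).mul_right s
  refine le_trans (norm_tsum_le_tsum_norm hsn) ?_
  refine le_trans (Summable.tsum_le_tsum hbd hsn ((summable_Vf (C := C)).mul_right s)) ?_
  rw [tsum_mul_right]

/-! ### termwise bound -/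

lemma norm_term_le (g : SchwartzMap ℝ ℂ) {C : ℝ} (hC0 : 0 ≤ C)
    (hdec : ∀ t : ℝ, ‖g t‖ ≤ C/(1+t^4)) {x s : ℝ} (ω : ℝ)
    (hx0 : 0 ≤ x) (hx1 : x < 1) (hs0 : 0 ≤ s) (hs1 : s ≤ 1) (k j : ℤ) :
    ‖(starRingEnd ℂ) (tfShift ((k:ℝ)+x, ω) (⇑g) (s+(j:ℝ)))‖ ≤ Vf C (j-k) := by
  rw [norm_tf]
  refine le_trans (hdec _) (trans_bound hC0 ?_)
  rw [show s + (j:ℝ) - ((k:ℝ)+x) - ((j-k : ℤ):ℝ) = s - x from by push_cast; ring]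
  exact abs_le.mpr ⟨by linarith, by linarith⟩

lemma summable_F (g : SchwartzMap ℝ ℂ) {C : ℝ} (hC0 : 0 ≤ C)
    (hdec : ∀ t : ℝ, ‖g t‖ ≤ C/(1+t^4)) {x s : ℝ} (ω : ℝ)
    (hx0 : 0 ≤ x) (hx1 : x < 1) (hs0 : 0 ≤ s) (hs1 : s ≤ 1) (k : ℤ) :
    Summable (fun j : ℤ => (starRingEnd ℂ) (tfShift ((k:ℝ)+x, ω) (⇑g) (s+(j:ℝ)))) := by
  refine Summable.of_norm ?_
  refine Summable.of_nonneg_of_le (fun j => norm_nonneg _)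
    (fun j => norm_term_le g hC0 hdec ω hx0 hx1 hs0 hs1 k j) ?_
  have hinj : Function.Injective (fun j : ℤ => j - k) := sub_left_injective
  exact ((summable_Vf (C := C)).comp_injective hinj).congr fun j => rfl

lemma tsum_shift_tB (C : ℝ) (d : ℕ) (k : ℤ) :
    ∑' j : ℤ, (if (d:ℤ) ≤ |j - k| then Vf C (j-k) else 0) = tB C d := by
  rw [tB]
  rw [← Equiv.tsum_eq (Equiv.addRight k) (fun j => if (d:ℤ) ≤ |j - k| then Vf C (j-k) else 0)]
  refine tsum_congr fun p => ?_
  simp [Equiv.coe_addRight, add_sub_cancel_right]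

/-! ### Pointwise bound on the truncated sum -/

lemma P_bound (g : SchwartzMap ℝ ℂ) {C : ℝ} (hC : 0 < C)
    (hdec : ∀ t : ℝ, ‖g t‖ ≤ C/(1+t^4) ∧ ‖deriv (⇑g) t‖ ≤ C/(1+t^4))
    {x ω δ : ℝ} (hx0 : 0 ≤ x) (hx1 : x < 1) (hzero : zak (⇑g) x ω = 0)
    (hδ0 : 0 ≤ δ) (hδ1 : δ ≤ 1) (n : ℕ) (k : ℤ) {s : ℝ} (hs0 : 0 ≤ s) (hsδ : s ≤ δ) :
    ‖∑ j ∈ Finset.Icc (-(n:ℤ)) n, (starRingEnd ℂ) (tfShift ((k:ℝ)+x, ω) (⇑g) (s+(j:ℝ)))‖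
      ≤ beta C (∑' p : ℤ, Vf C p) δ n k.natAbs := by
  set L : ℝ := ∑' p : ℤ, Vf C p with hL
  have hs1 : s ≤ 1 := le_trans hsδ hδ1
  set F : ℤ → ℂ := fun j => (starRingEnd ℂ) (tfShift ((k:ℝ)+x, ω) (⇑g) (s+(j:ℝ))) with hFdef
  have hFsum : Summable F := summable_F g hC.le (fun t => (hdec t).1) ω hx0 hx1 hs0 hs1 k
  have hFnorm : ∀ j, ‖F j‖ ≤ Vf C (j-k) :=
    fun j => norm_term_le g hC.le (fun t => (hdec t).1) ω hx0 hx1 hs0 hs1 k j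
  have hFnormsum : Summable (fun j => ‖F j‖) := by
    refine Summable.of_nonneg_of_le (fun j => norm_nonneg _) hFnorm ?_
    exact ((summable_Vf (C := C)).comp_injective sub_left_injective).congr fun j => rfl
  by_cases hk : k.natAbs ≤ n
  · -- main regime
    set d : ℕ := n + 1 - k.natAbs with hd
    have hsplit := Summable.sum_add_tsum_subtype_compl hFsum (Finset.Icc (-(n:ℤ)) n)
    have hEq : ∑ j ∈ Finset.Icc (-(n:ℤ)) n, F j
        = ∑' j : ℤ, F j - ∑' j : {j : ℤ // j ∉ Finset.Icc (-(n:ℤ)) n}, F ↑j := by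
      rw [← hsplit]; ring
    rw [hEq]
    have h1 : ‖∑' j : ℤ, F j‖ ≤ L * δ := by
      rw [hFdef, norm_full_sum (⇑g) x ω s k]
      refine le_trans (zak_small g hC hdec hx0 hx1 hzero hs0 hs1) ?_
      exact mul_le_mul_of_nonneg_left hsδ (tsum_nonneg fun p => Vf_nonneg hC.le p)
    have h2 : ‖∑' j : {j : ℤ // j ∉ Finset.Icc (-(n:ℤ)) n}, F ↑j‖ ≤ tB C d := by
      set μ : ℤ → ℝ := fun j => if (d:ℤ) ≤ |j - k| then Vf C (j-k) else 0 with hμ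
      have hμsum : Summable μ := by
        refine Summable.of_nonneg_of_le (fun j => ?_) (fun j => ?_)
          (((summable_Vf (C := C)).comp_injective sub_left_injective).congr fun j => (rfl : Vf C (j-k) = Vf C (j-k)))
        · rw [hμ]; dsimp only; split
          · exact Vf_nonneg hC.le _
          · exact le_refl 0
        · rw [hμ]; dsimp only; split
          · exact le_refl _
          · exact Vf_nonneg hC.le _
      have hnormle : ∀ j : {j : ℤ // j ∉ Finset.Icc (-(n:ℤ)) n}, ‖F ↑j‖ ≤ μ ↑j := by
        rintro ⟨j, hj⟩
        have hjcond : (d:ℤ) ≤ |j - k| := by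
          rw [Finset.mem_Icc] at hj
          rw [Int.abs_eq_natAbs]
          omega
        dsimp only
        rw [hμ]
        dsimp only
        rw [if_pos hjcond]
        exact hFnorm j
      refine le_trans (norm_tsum_le_tsum_norm (hFnormsum.subtype _)) ?_
      refine le_trans (Summable.tsum_le_tsum hnormle (hFnormsum.subtype _) (hμsum.subtype _)) ?_
      refine le_trans (Summable.tsum_subtype_le μ _ (fun j => ?_) hμsum) ?_
      · rw [hμ]; dsimp only; split
        · exact Vf_nonneg hC.le _
        · exact le_refl 0
      · rw [hμ]
        exact le_of_eq (tsum_shift_tB C d k)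
    refine le_trans (norm_sub_le _ _) ?_
    rw [beta, if_pos hk]
    exact add_le_add h1 h2
  · -- far regime
    set d : ℕ := k.natAbs - n with hd
    refine le_trans (norm_sum_le _ _) ?_
    rw [beta, if_neg hk]
    set μ : ℤ → ℝ := fun j => if (d:ℤ) ≤ |j - k| then Vf C (j-k) else 0 with hμ
    have hμsum : Summable μ := by
      refine Summable.of_nonneg_of_le (fun j => ?_) (fun j => ?_)
        (((summable_Vf (C := C)).comp_injective sub_left_injective).congr fun j => (rfl : Vf C (j-k) = Vf C (j-k)))
      · rw [hμ]; dsimp only; split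
        · exact Vf_nonneg hC.le _
        · exact le_refl 0
      · rw [hμ]; dsimp only; split
        · exact le_refl _
        · exact Vf_nonneg hC.le _
    have hterm : ∀ j ∈ Finset.Icc (-(n:ℤ)) n, ‖F j‖ ≤ μ j := by
      intro j hj
      rw [Finset.mem_Icc] at hj
      have hjcond : (d:ℤ) ≤ |j - k| := by
        rw [Int.abs_eq_natAbs]
        omega
      rw [hμ]
      dsimp only
      rw [if_pos hjcond]
      exact hFnorm j
    refine le_trans (Finset.sum_le_sum hterm) ?_
    refine le_trans (Summable.sum_le_tsum _ (fun j _ => ?_) hμsum) ?_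
    · rw [hμ]; dsimp only; split
      · exact Vf_nonneg hC.le _
      · exact le_refl 0
    · rw [hμ]
      exact le_of_eq (tsum_shift_tB C d k)

/-! ### The test function -/

noncomputable def Pfun (g : ℝ → ℂ) (x ω : ℝ) (n : ℕ) (k : ℤ) : ℝ → ℂ :=
  fun s => ∑ j ∈ Finset.Icc (-(n:ℤ)) n, (starRingEnd ℂ) (tfShift ((k:ℝ)+x, ω) g (s+(j:ℝ)))

def SS (n : ℕ) (δ : ℝ) : Set ℝ := ⋃ j ∈ Finset.Icc (-(n:ℤ)) n, Ico (j:ℝ) ((j:ℝ)+δ)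

noncomputable def ff (n : ℕ) (δ : ℝ) : ℝ → ℂ := Set.indicator (SS n δ) (fun _ => (1:ℂ))

lemma meas_SS (n : ℕ) (δ : ℝ) : MeasurableSet (SS n δ) :=
  Finset.measurableSet_biUnion _ (fun j _ => measurableSet_Ico)

lemma disj_SS (n : ℕ) {δ : ℝ} (hδ1 : δ ≤ 1) :
    (↑(Finset.Icc (-(n:ℤ)) n) : Set ℤ).PairwiseDisjoint
      (fun j : ℤ => Ico (j:ℝ) ((j:ℝ)+δ)) := by
  intro i _ j _ hij
  refine Set.disjoint_left.mpr fun t hti htj => hij ?_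
  obtain ⟨hi1, hi2⟩ := hti
  obtain ⟨hj1, hj2⟩ := htj
  have h1 : (i:ℝ) < (j:ℝ) + 1 := by linarith
  have h2 : (j:ℝ) < (i:ℝ) + 1 := by linarith
  have : i < j + 1 := by exact_mod_cast h1
  have : j < i + 1 := by exact_mod_cast h2
  omega

lemma vol_SS (n : ℕ) {δ : ℝ} (hδ0 : 0 ≤ δ) (hδ1 : δ ≤ 1) :
    volume (SS n δ) = (2*n+1 : ℕ) • ENNReal.ofReal δ := by
  rw [SS, measure_biUnion_finset (disj_SS n hδ1) (fun j _ => measurableSet_Ico)]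
  have : ∀ j ∈ Finset.Icc (-(n:ℤ)) n, volume (Ico (j:ℝ) ((j:ℝ)+δ)) = ENNReal.ofReal δ := by
    intro j _
    rw [Real.volume_Ico, add_sub_cancel_left]
  rw [Finset.sum_congr rfl this, Finset.sum_const, Int.card_Icc]
  congr 1
  omega

lemma integral_ff_sq (n : ℕ) {δ : ℝ} (hδ0 : 0 ≤ δ) (hδ1 : δ ≤ 1) :
    ∫ t : ℝ, ‖ff n δ t‖^2 = (2*n+1 : ℕ) * δ := by
  have h1 : ∀ t, ‖ff n δ t‖^2 = Set.indicator (SS n δ) (fun _ => (1:ℝ)) t := by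
    intro t
    unfold ff
    by_cases h : t ∈ SS n δ <;> simp [h]
  simp_rw [h1]
  rw [integral_indicator_const (1:ℝ) (meas_SS n δ), measureReal_def, vol_SS n hδ0 hδ1]
  simp only [smul_eq_mul, mul_one]
  rw [nsmul_eq_mul, ENNReal.toReal_mul, ENNReal.toReal_natCast, ENNReal.toReal_ofReal hδ0]

lemma memLp_ff (n : ℕ) {δ : ℝ} (hδ0 : 0 ≤ δ) (hδ1 : δ ≤ 1) :
    MemLp (ff n δ) 2 volume := by
  refine memLp_indicator_const 2 (meas_SS n δ) 1 (Or.inr ?_)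
  rw [vol_SS n hδ0 hδ1]
  rw [nsmul_eq_mul]
  exact ENNReal.mul_ne_top (ENNReal.natCast_ne_top _) ENNReal.ofReal_ne_top

lemma cont_tf (g : SchwartzMap ℝ ℂ) (a b : ℝ) :
    Continuous (fun t : ℝ => (starRingEnd ℂ) (tfShift (a, b) g t)) := by
  have h1 : Continuous (fun t : ℝ => tfShift (a, b) (⇑g) t) := by
    unfold tfShift
    exact (Complex.continuous_exp.comp
      ((continuous_const).mul Complex.continuous_ofReal)).mul
      (g.continuous.comp (continuous_id.sub continuous_const))
  exact continuous_star.comp h1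

lemma cont_P (g : SchwartzMap ℝ ℂ) (x ω : ℝ) (n : ℕ) (k : ℤ) :
    Continuous (Pfun (⇑g) x ω n k) := by
  unfold Pfun
  refine continuous_finset_sum _ fun j _ => ?_
  exact (cont_tf g ((k:ℝ)+x) ω).comp (continuous_id.add continuous_const)

/-! ### Phase splitting -/

lemma phase_split (g : ℝ → ℂ) (a ω s : ℝ) (l j : ℤ) :
    (starRingEnd ℂ) (tfShift (a, (l:ℝ)+ω) g (s+(j:ℝ)))
      = cexp (-(2*(Real.pi:ℂ)*I*(l:ℂ)*(s:ℂ))) * (starRingEnd ℂ) (tfShift (a, ω) g (s+(j:ℝ))) := by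
  unfold tfShift
  rw [map_mul, map_mul, ← mul_assoc]
  congr 1
  rw [← Complex.exp_conj, ← Complex.exp_conj]
  have hc1 : (starRingEnd ℂ) (2*(Real.pi:ℂ)*I*((((l:ℝ)+ω):ℝ):ℂ)*((s+(j:ℝ) : ℝ):ℂ))
      = -(2*(Real.pi:ℂ)*I*((((l:ℝ)+ω):ℝ):ℂ)*((s+(j:ℝ) : ℝ):ℂ)) := by
    simp only [map_mul, Complex.conj_I, Complex.conj_ofReal, map_ofNat]
    ring
  have hc2 : (starRingEnd ℂ) (2*(Real.pi:ℂ)*I*((ω:ℝ):ℂ)*((s+(j:ℝ) : ℝ):ℂ))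
      = -(2*(Real.pi:ℂ)*I*((ω:ℝ):ℂ)*((s+(j:ℝ) : ℝ):ℂ)) := by
    simp only [map_mul, Complex.conj_I, Complex.conj_ofReal, map_ofNat]
    ring
  rw [hc1, hc2, ← Complex.exp_add]
  have key : -(2*(Real.pi:ℂ)*I*((((l:ℝ)+ω):ℝ):ℂ)*((s+(j:ℝ) : ℝ):ℂ))
      = (-(2*(Real.pi:ℂ)*I*(l:ℂ)*(s:ℂ)) + -(2*(Real.pi:ℂ)*I*((ω:ℝ):ℂ)*((s+(j:ℝ) : ℝ):ℂ)))
        + ((-(l*j) : ℤ):ℂ) * (2*(Real.pi:ℂ)*I) := by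
    push_cast
    ring
  rw [key, Complex.exp_add, Complex.exp_int_mul_two_pi_mul_I, mul_one]

/-! ### The Gabor coefficient as a Fourier coefficient -/

lemma coef_eq (g : SchwartzMap ℝ ℂ) (x ω : ℝ) {δ : ℝ} (hδ0 : 0 < δ) (hδ1 : δ ≤ 1)
    (n : ℕ) (k l : ℤ) :
    gaborCoef (⇑g) (ff n δ) ((k:ℝ)+x, (l:ℝ)+ω)
      = ∫ s in (0:ℝ)..δ, cexp (-(2*(Real.pi:ℂ)*I*(l:ℂ)*(s:ℂ))) * Pfun (⇑g) x ω n k s := by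
  set ψ : ℝ → ℂ := fun t => (starRingEnd ℂ) (tfShift ((k:ℝ)+x, (l:ℝ)+ω) (⇑g) t) with hψ
  have hψc : Continuous ψ := cont_tf g ((k:ℝ)+x) ((l:ℝ)+ω)
  have h1 : ∀ t, ff n δ t * ψ t = Set.indicator (SS n δ) ψ t := by
    intro t
    unfold ff
    by_cases h : t ∈ SS n δ <;> simp [h]
  unfold gaborCoef
  calc (∫ t : ℝ, ff n δ t * ψ t) = ∫ t : ℝ, Set.indicator (SS n δ) ψ t := by
        exact integral_congr_ae (Filter.Eventually.of_forall h1)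
  _ = ∫ t in SS n δ, ψ t := integral_indicator (meas_SS n δ)
  _ = ∑ j ∈ Finset.Icc (-(n:ℤ)) n, ∫ t in Ico (j:ℝ) ((j:ℝ)+δ), ψ t := by
        rw [SS]
        exact integral_biUnion_finset _ (fun j _ => measurableSet_Ico) (disj_SS n hδ1)
          (fun j _ => (hψc.integrableOn_Icc).mono_set Ico_subset_Icc_self)
  _ = ∑ j ∈ Finset.Icc (-(n:ℤ)) n, ∫ s in (0:ℝ)..δ, ψ (s + (j:ℝ)) := by
        refine Finset.sum_congr rfl fun j _ => ?_
        rw [integral_Ico_eq_integral_Ioo, ← integral_Ioc_eq_integral_Ioo,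
          ← intervalIntegral.integral_of_le (by linarith : (j:ℝ) ≤ (j:ℝ)+δ)]
        rw [intervalIntegral.integral_comp_add_right ψ (j:ℝ), zero_add, add_comm δ (j:ℝ)]
  _ = ∑ j ∈ Finset.Icc (-(n:ℤ)) n, ∫ s in (0:ℝ)..δ,
        cexp (-(2*(Real.pi:ℂ)*I*(l:ℂ)*(s:ℂ)))
          * (starRingEnd ℂ) (tfShift ((k:ℝ)+x, ω) (⇑g) (s+(j:ℝ))) := by
        refine Finset.sum_congr rfl fun j _ => ?_
        refine intervalIntegral.integral_congr fun s _ => ?_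
        rw [hψ]
        exact phase_split (⇑g) ((k:ℝ)+x) ω s l j
  _ = ∫ s in (0:ℝ)..δ, ∑ j ∈ Finset.Icc (-(n:ℤ)) n,
        cexp (-(2*(Real.pi:ℂ)*I*(l:ℂ)*(s:ℂ)))
          * (starRingEnd ℂ) (tfShift ((k:ℝ)+x, ω) (⇑g) (s+(j:ℝ))) := by
        refine (intervalIntegral.integral_finset_sum fun j _ => ?_).symm
        refine Continuous.intervalIntegrable ?_ _ _
        exact (Complex.continuous_exp.comp
          ((continuous_const).mul Complex.continuous_ofReal).neg).mul
          ((cont_tf g ((k:ℝ)+x) ω).comp (continuous_id.add continuous_const))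
  _ = ∫ s in (0:ℝ)..δ, cexp (-(2*(Real.pi:ℂ)*I*(l:ℂ)*(s:ℂ))) * Pfun (⇑g) x ω n k s := by
        refine intervalIntegral.integral_congr fun s _ => ?_
        rw [Pfun, Finset.mul_sum]

/-! ### Fourier coefficient computation -/

lemma fourier_eq (g : SchwartzMap ℝ ℂ) (x ω : ℝ) {δ : ℝ} (hδ0 : 0 < δ) (hδ1 : δ ≤ 1)
    (n : ℕ) (k l : ℤ) :
    haveI : Fact ((0:ℝ) < 1) := ⟨one_pos⟩
    fourierCoeff (AddCircle.liftIoc 1 0 (Set.indicator (Ioc 0 δ) (Pfun (⇑g) x ω n k))) l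
      = ∫ s in (0:ℝ)..δ, cexp (-(2*(Real.pi:ℂ)*I*(l:ℂ)*(s:ℂ))) * Pfun (⇑g) x ω n k s := by
  haveI : Fact ((0:ℝ) < 1) := ⟨one_pos⟩
  set P : ℝ → ℂ := Pfun (⇑g) x ω n k with hP
  rw [fourierCoeff_eq_intervalIntegral _ l 0]
  rw [show (1:ℝ)/1 = 1 from by norm_num, one_smul, zero_add]
  rw [intervalIntegral.integral_of_le (zero_le_one), intervalIntegral.integral_of_le hδ0.le]
  have hEq : Set.EqOn
      (fun s : ℝ => (fourier (-l)) (s : AddCircle (1:ℝ)) • (AddCircle.liftIoc 1 0 (Set.indicator (Ioc 0 δ) P)) s)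
      (fun s : ℝ => Set.indicator (Ioc 0 δ) (fun u => cexp (-(2*(Real.pi:ℂ)*I*(l:ℂ)*(u:ℂ))) * P u) s)
      (Ioc (0:ℝ) 1) := by
    intro s hs
    have hs' : s ∈ Ioc (0:ℝ) (0+1) := by rwa [zero_add]
    have hfour : (fourier (-l) : C(AddCircle (1:ℝ), ℂ)) (s : AddCircle (1:ℝ))
        = cexp (-(2*(Real.pi:ℂ)*I*(l:ℂ)*(s:ℂ))) := by
      rw [fourier_coe_apply]
      push_cast
      rw [div_one]
      congr 1
      ring
    dsimp only
    rw [AddCircle.liftIoc_coe_apply hs', smul_eq_mul, hfour]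
    exact (Set.indicator_mul_right (i := s) (Ioc (0:ℝ) δ)
      (fun u : ℝ => cexp (-(2*(Real.pi:ℂ)*I*(l:ℂ)*(u:ℂ)))) P).symm
  rw [setIntegral_congr_fun measurableSet_Ioc hEq]
  rw [integral_indicator measurableSet_Ioc, Measure.restrict_restrict measurableSet_Ioc,
    inter_eq_self_of_subset_left (Ioc_subset_Ioc_right hδ1)]

/-! ### Parseval block -/

lemma parseval_block (g : SchwartzMap ℝ ℂ) (x ω : ℝ) {δ : ℝ} (hδ0 : 0 < δ) (hδ1 : δ ≤ 1)
    (n : ℕ) (k : ℤ) {B0 : ℝ} (hB : ∀ s, ‖Pfun (⇑g) x ω n k s‖ ≤ B0) :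
    haveI : Fact ((0:ℝ) < 1) := ⟨one_pos⟩
    Summable (fun l : ℤ =>
      ‖fourierCoeff (AddCircle.liftIoc 1 0 (Set.indicator (Ioc 0 δ) (Pfun (⇑g) x ω n k))) l‖^2)
    ∧ ∑' l : ℤ,
      ‖fourierCoeff (AddCircle.liftIoc 1 0 (Set.indicator (Ioc 0 δ) (Pfun (⇑g) x ω n k))) l‖^2
        = ∫ s in Ioc (0:ℝ) δ, ‖Pfun (⇑g) x ω n k s‖^2 := by
  haveI : Fact ((0:ℝ) < 1) := ⟨one_pos⟩
  set P : ℝ → ℂ := Pfun (⇑g) x ω n k with hP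
  set H : ℝ → ℂ := Set.indicator (Ioc 0 δ) P with hH
  have hHmeas : Measurable H := ((cont_P g x ω n k).measurable).indicator measurableSet_Ioc
  have hHb : ∀ s, ‖H s‖ ≤ max B0 0 := by
    intro s
    rw [hH]
    by_cases h : s ∈ Ioc (0:ℝ) δ
    · rw [Set.indicator_of_mem h]
      exact le_trans (hB s) (le_max_left _ _)
    · rw [Set.indicator_of_notMem h, norm_zero]
      exact le_max_right _ _
  have hlift_meas : Measurable (AddCircle.liftIoc 1 0 H) := by
    have heq : AddCircle.liftIoc 1 0 H
        = fun q => H ((AddCircle.measurableEquivIoc 1 0 q : ℝ)) := rfl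
    rw [heq]
    exact hHmeas.comp (measurable_subtype_coe.comp (AddCircle.measurableEquivIoc 1 0).measurable)
  have hlift_bd : ∀ q, ‖AddCircle.liftIoc 1 0 H q‖ ≤ max B0 0 := fun q => hHb _
  have hmem : MemLp (AddCircle.liftIoc 1 0 H) 2 AddCircle.haarAddCircle :=
    MemLp.of_bound hlift_meas.aestronglyMeasurable _ (Filter.Eventually.of_forall hlift_bd)
  set HLp := hmem.toLp (AddCircle.liftIoc 1 0 H) with hHLp
  have hcoeff : ∀ l : ℤ, fourierCoeff (↑↑HLp : AddCircle (1:ℝ) → ℂ) l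
      = fourierCoeff (AddCircle.liftIoc 1 0 H) l := by
    intro l
    unfold fourierCoeff
    refine integral_congr_ae ?_
    filter_upwards [hmem.coeFn_toLp] with t ht
    rw [ht]
  -- summability
  have hsummable : Summable (fun l : ℤ =>
      ‖fourierCoeff (AddCircle.liftIoc 1 0 H) l‖^2) := by
    have hml := lp.memℓp (fourierBasis.repr HLp)
    have h2 := (memℓp_gen_iff (p := 2) (by norm_num)).mp hml
    refine h2.congr fun l => ?_
    rw [fourierBasis_repr, hcoeff l]
    rw [show ((2:ENNReal)).toReal = ((2:ℕ):ℝ) from by norm_num, Real.rpow_natCast]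
  refine ⟨hsummable, ?_⟩
  have hpars := tsum_sq_fourierCoeff HLp
  have hL : ∑' l : ℤ, ‖fourierCoeff (AddCircle.liftIoc 1 0 H) l‖^2
      = ∫ t : AddCircle (1:ℝ), ‖HLp t‖^2 ∂AddCircle.haarAddCircle := by
    rw [← hpars]
    exact tsum_congr fun l => by rw [hcoeff l]
  rw [hL]
  have hvol : (volume : Measure (AddCircle (1:ℝ))) = AddCircle.haarAddCircle := by
    rw [AddCircle.volume_eq_smul_haarAddCircle]
    simp
  have hR1 : ∫ t : AddCircle (1:ℝ), ‖HLp t‖^2 ∂AddCircle.haarAddCircle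
      = ∫ t : AddCircle (1:ℝ), ‖AddCircle.liftIoc 1 0 H t‖^2 ∂AddCircle.haarAddCircle := by
    refine integral_congr_ae ?_
    filter_upwards [hmem.coeFn_toLp] with t ht
    rw [ht]
  rw [hR1, ← hvol]
  have hR2 := AddCircle.integral_preimage 1 0 (fun t : AddCircle (1:ℝ) => ‖AddCircle.liftIoc 1 0 H t‖^2)
  rw [zero_add] at hR2
  rw [← hR2]
  have hR3 : ∫ s in Ioc (0:ℝ) 1, ‖AddCircle.liftIoc 1 0 H (↑s)‖^2
      = ∫ s in Ioc (0:ℝ) 1, ‖H s‖^2 := by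
    refine setIntegral_congr_fun measurableSet_Ioc fun s hs => ?_
    have hs' : s ∈ Ioc (0:ℝ) (0+1) := by rwa [zero_add]
    rw [AddCircle.liftIoc_coe_apply hs']
  rw [hR3]
  have hR4 : ∀ s : ℝ, ‖H s‖^2 = Set.indicator (Ioc (0:ℝ) δ) (fun u => ‖P u‖^2) s := by
    intro s
    rw [hH]
    by_cases h : s ∈ Ioc (0:ℝ) δ
    · rw [Set.indicator_of_mem h, Set.indicator_of_mem h]
    · rw [Set.indicator_of_notMem h, Set.indicator_of_notMem h, norm_zero]
      norm_num
  rw [setIntegral_congr_fun measurableSet_Ioc (fun s _ => hR4 s)]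
  rw [integral_indicator measurableSet_Ioc, Measure.restrict_restrict measurableSet_Ioc,
    inter_eq_self_of_subset_left (Ioc_subset_Ioc_right hδ1)]

lemma Pfun_apply (g : ℝ → ℂ) (x ω : ℝ) (n : ℕ) (k : ℤ) (s : ℝ) :
    Pfun g x ω n k s
      = ∑ j ∈ Finset.Icc (-(n:ℤ)) n, (starRingEnd ℂ) (tfShift ((k:ℝ)+x, ω) g (s+(j:ℝ))) := rfl

lemma Pfun_bound (g : SchwartzMap ℝ ℂ) {C : ℝ} (hC0 : 0 ≤ C)
    (hdec1 : ∀ t : ℝ, ‖g t‖ ≤ C/(1+t^4)) (x ω : ℝ) (n : ℕ) (k : ℤ) (s : ℝ) :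
    ‖Pfun (⇑g) x ω n k s‖ ≤ ((2*n+1 : ℕ):ℝ) * C := by
  rw [Pfun_apply]
  refine le_trans (norm_sum_le _ _) ?_
  have hterm : ∀ j ∈ Finset.Icc (-(n:ℤ)) n,
      ‖(starRingEnd ℂ) (tfShift ((k:ℝ)+x, ω) (⇑g) (s+(j:ℝ)))‖ ≤ C := by
    intro j _
    rw [norm_tf]
    refine le_trans (hdec1 _) ?_
    exact div_le_self hC0 (le_add_of_nonneg_right (by positivity))
  refine le_trans (Finset.sum_le_sum hterm) ?_
  rw [Finset.sum_const, Int.card_Icc, nsmul_eq_mul]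
  have : (n + 1 - -(n:ℤ)).toNat = 2*n+1 := by omega
  rw [this]

lemma integral_P_le (g : SchwartzMap ℝ ℂ) {C : ℝ} (hC : 0 < C)
    (hdec : ∀ t : ℝ, ‖g t‖ ≤ C/(1+t^4) ∧ ‖deriv (⇑g) t‖ ≤ C/(1+t^4))
    {x ω δ : ℝ} (hx0 : 0 ≤ x) (hx1 : x < 1) (hzero : zak (⇑g) x ω = 0)
    (hδ0 : 0 < δ) (hδ1 : δ ≤ 1) (n : ℕ) (k : ℤ) :
    ∫ s in Ioc (0:ℝ) δ, ‖Pfun (⇑g) x ω n k s‖^2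
      ≤ δ * (beta C (∑' p : ℤ, Vf C p) δ n k.natAbs)^2 := by
  have hβ0 : 0 ≤ beta C (∑' p : ℤ, Vf C p) δ n k.natAbs :=
    beta_nonneg hC.le (tsum_nonneg fun p => Vf_nonneg hC.le p) hδ0.le n _
  have h1 : ∫ s in Ioc (0:ℝ) δ, ‖Pfun (⇑g) x ω n k s‖^2
      ≤ ∫ _ in Ioc (0:ℝ) δ, (beta C (∑' p : ℤ, Vf C p) δ n k.natAbs)^2 := by
    refine setIntegral_mono_on ?_ ?_ measurableSet_Ioc ?_
    · exact (((cont_P g x ω n k).norm.pow 2)).integrableOn_Ioc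
    · refine integrableOn_const (ne_of_lt ?_)
      rw [Real.volume_Ioc]
      exact ENNReal.ofReal_lt_top
    · intro s hs
      have hb := P_bound g hC hdec hx0 hx1 hzero hδ0.le hδ1 n k hs.1.le hs.2
      rw [← Pfun_apply] at hb
      exact pow_le_pow_left₀ (norm_nonneg _) hb 2
  refine le_trans h1 ?_
  rw [setIntegral_const, measureReal_def, Real.volume_Ioc, sub_zero, ENNReal.toReal_ofReal hδ0.le, smul_eq_mul]

lemma int_frac_eq {k k' : ℤ} {x x' : ℝ} (hx0 : 0 ≤ x) (hx1 : x < 1)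
    (hx0' : 0 ≤ x') (hx1' : x' < 1) (h : (k:ℝ) + x = (k':ℝ) + x') : k = k' ∧ x = x' := by
  have h1 : ((k - k' : ℤ):ℝ) = x' - x := by push_cast; linarith
  have h2 : |((k - k' : ℤ):ℝ)| < 1 := by
    rw [h1, abs_lt]
    exact ⟨by linarith, by linarith⟩
  rw [← Int.cast_abs] at h2
  have h3 : |k - k'| < 1 := by exact_mod_cast h2
  rw [Int.abs_eq_natAbs] at h3
  have h4 : k = k' := by omega
  refine ⟨h4, ?_⟩
  subst h4
  have : ((0:ℤ):ℝ) = x' - x := by rw [← h1]; norm_num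
  simp at this
  linarith

end GNF

set_option maxHeartbeats 2000000 in
/-- If `z_1, …, z_M ∈ [0,1)²` are distinct zeros of the Zak transform of a Schwartz window `g`,
then the Gabor system over `Γ = ⋃_m ((ℤ×ℤ) + z_m)` is not a frame for `L²(ℝ)`. -/
theorem gabor_not_frame_of_zak_zeros (g : SchwartzMap ℝ ℂ) (M : ℕ) (hM : 1 ≤ M)
    (z : Fin M → ℝ × ℝ) (hz : Function.Injective z) (hz' : ∀ m, z m ∈ unitSquare)
    (hzero : ∀ m, zak (⇑g) ((z m).1) ((z m).2) = 0) :
    ¬ IsGaborFrame (⇑g) (⋃ m, intLatticeShift (z m)) := by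
  intro hframe
  obtain ⟨A, B, hA, hAB, hfr⟩ := hframe
  obtain ⟨C, hC, hdec⟩ := GNF.schwartz_decay g
  set L : ℝ := ∑' p : ℤ, GNF.Vf C p with hLdef
  have hL0 : 0 ≤ L := tsum_nonneg fun p => GNF.Vf_nonneg hC.le p
  set Θ : ℝ := GNF.Theta C with hΘdef
  have hΘ0 : 0 ≤ Θ := GNF.Theta_nonneg C
  have hM0 : (0:ℝ) < (M:ℝ) := by exact_mod_cast Nat.lt_of_lt_of_le Nat.zero_lt_one hM
  -- choose δ
  set δ : ℝ := min 1 (Real.sqrt (A / (8*(M:ℝ)*(L^2+1)))) with hδdef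
  have hquot : 0 < A / (8*(M:ℝ)*(L^2+1)) := by positivity
  have hδ0 : 0 < δ := lt_min one_pos (Real.sqrt_pos.mpr hquot)
  have hδ1 : δ ≤ 1 := min_le_left _ _
  have hδsq : δ^2 ≤ A / (8*(M:ℝ)*(L^2+1)) := by
    have h1 : δ ≤ Real.sqrt (A / (8*(M:ℝ)*(L^2+1))) := min_le_right _ _
    have h2 := Real.sq_sqrt hquot.le
    nlinarith [Real.sqrt_nonneg (A / (8*(M:ℝ)*(L^2+1))), hδ0]
  have hkey : 4*(M:ℝ)*(L*δ)^2 ≤ A/2 := by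
    have h8 : (0:ℝ) < 8*(M:ℝ)*(L^2+1) := by positivity
    have hu : (A / (8*(M:ℝ)*(L^2+1))) * (8*(M:ℝ)*(L^2+1)) = A := div_mul_cancel₀ A h8.ne'
    have h1 : L^2 * δ^2 ≤ L^2 * (A/(8*(M:ℝ)*(L^2+1))) :=
      mul_le_mul_of_nonneg_left hδsq (sq_nonneg L)
    nlinarith [hquot.le, hM0, sq_nonneg L, mul_le_mul_of_nonneg_left h1 (by positivity : (0:ℝ) ≤ 4*(M:ℝ))]
  -- choose n
  set n : ℕ := ⌈(6*(M:ℝ)*Θ)/A⌉₊ + 1 with hndef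
  have hn1 : 6*(M:ℝ)*Θ < A*(n:ℝ) := by
    have h1 := Nat.le_ceil ((6*(M:ℝ)*Θ)/A)
    have h2 : (6*(M:ℝ)*Θ) ≤ (⌈(6*(M:ℝ)*Θ)/A⌉₊ : ℝ) * A := by
      rw [← div_le_iff₀ hA] at *
      exact h1
    have h3 : ((⌈(6*(M:ℝ)*Θ)/A⌉₊ : ℝ)) < (n:ℝ) := by
      rw [hndef]
      push_cast
      linarith
    nlinarith [hA]
  -- the test function
  set f : ℝ → ℂ := GNF.ff n δ with hfdef
  have hmem := GNF.memLp_ff n hδ0.le hδ1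
  obtain ⟨hlow, -⟩ := hfr f hmem
  -- index parametrization
  set e : (Fin M × ℤ × ℤ) → ℝ × ℝ :=
    fun i => (((i.2.1 : ℝ) + (z i.1).1), ((i.2.2 : ℝ) + (z i.1).2)) with hedef
  have hinj : Function.Injective e := by
    rintro ⟨m, k, l⟩ ⟨m', k', l'⟩ hEq
    rw [Prod.ext_iff] at hEq
    obtain ⟨h1, h2⟩ := hEq
    simp only [hedef] at h1 h2
    obtain ⟨hx0, hx1⟩ := (hz' m).1
    obtain ⟨hy0, hy1⟩ := (hz' m).2
    obtain ⟨hx0', hx1'⟩ := (hz' m').1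
    obtain ⟨hy0', hy1'⟩ := (hz' m').2
    obtain ⟨hk, hx⟩ := GNF.int_frac_eq hx0 hx1 hx0' hx1' h1
    obtain ⟨hl, hy⟩ := GNF.int_frac_eq hy0 hy1 hy0' hy1' h2
    have hzm : z m = z m' := Prod.ext hx hy
    have hm' : m = m' := hz hzm
    simp [hm', hk, hl]
  have hrange : (⋃ m, intLatticeShift (z m)) = Set.range e := by
    ext p
    simp only [Set.mem_iUnion, intLatticeShift, Set.mem_range]
    constructor
    · rintro ⟨m, ⟨k, l⟩, hkl⟩
      exact ⟨(m, k, l), hkl⟩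
    · rintro ⟨⟨m, k, l⟩, hi⟩
      exact ⟨m, (k, l), hi⟩
  rw [hrange] at hlow
  rw [tsum_range (fun γ : ℝ × ℝ => ‖gaborCoef (⇑g) f γ‖^2) hinj] at hlow
  -- per (m,k) block
  have key : ∀ (m : Fin M) (k : ℤ),
      Summable (fun l : ℤ => ‖gaborCoef (⇑g) f (e (m, k, l))‖^2) ∧
      ∑' l : ℤ, ‖gaborCoef (⇑g) f (e (m, k, l))‖^2
        ≤ δ * GNF.beta C L δ n k.natAbs ^ 2 := by
    intro m k
    obtain ⟨hx0, hx1⟩ := (hz' m).1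
    haveI : Fact ((0:ℝ) < 1) := ⟨one_pos⟩
    have hcoef : ∀ l : ℤ, gaborCoef (⇑g) f (e (m, k, l))
        = fourierCoeff (AddCircle.liftIoc 1 0
            (Set.indicator (Ioc 0 δ) (GNF.Pfun (⇑g) ((z m).1) ((z m).2) n k))) l := by
      intro l
      have h1 := GNF.coef_eq g ((z m).1) ((z m).2) hδ0 hδ1 n k l
      have h2 := GNF.fourier_eq g ((z m).1) ((z m).2) hδ0 hδ1 n k l
      rw [h2]
      exact h1
    have hB := GNF.Pfun_bound g hC.le (fun t => (hdec t).1) ((z m).1) ((z m).2) n k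
    have hpars := GNF.parseval_block g ((z m).1) ((z m).2) hδ0 hδ1 n k hB
    constructor
    · refine hpars.1.congr fun l => ?_
      rw [hcoef l]
    · have he1 : ∑' l : ℤ, ‖gaborCoef (⇑g) f (e (m, k, l))‖^2
          = ∫ s in Ioc (0:ℝ) δ, ‖GNF.Pfun (⇑g) ((z m).1) ((z m).2) n k s‖^2 := by
        rw [tsum_congr (fun l => by rw [hcoef l])]
        exact hpars.2
      rw [he1]
      exact GNF.integral_P_le g hC hdec hx0 hx1 (hzero m) hδ0 hδ1 n k
  -- summability over ℤ × ℤ for each m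
  have hsum_kl : ∀ m : Fin M,
      Summable (fun kl : ℤ × ℤ => ‖gaborCoef (⇑g) f (e (m, kl.1, kl.2))‖^2) := by
    intro m
    refine (summable_prod_of_nonneg (fun kl => sq_nonneg _)).mpr ⟨fun k => (key m k).1, ?_⟩
    refine Summable.of_nonneg_of_le (fun k => tsum_nonneg fun l => sq_nonneg _)
      (fun k => (key m k).2) ?_
    exact ((GNF.summable_beta_natAbs (L := L) (δ := δ) hC.le n).mul_left δ)
  have htsum_kl : ∀ m : Fin M,
      ∑' kl : ℤ × ℤ, ‖gaborCoef (⇑g) f (e (m, kl.1, kl.2))‖^2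
        ≤ δ * (4*((n:ℝ)+1)*(L*δ)^2 + 6*Θ) := by
    intro m
    rw [Summable.tsum_prod (hsum_kl m)]
    have h1 : ∑' k : ℤ, ∑' l : ℤ, ‖gaborCoef (⇑g) f (e (m, k, l))‖^2
        ≤ ∑' k : ℤ, δ * GNF.beta C L δ n k.natAbs ^ 2 := by
      refine Summable.tsum_le_tsum (fun k => (key m k).2) ?_ ?_
      · refine (summable_prod_of_nonneg (fun kl => sq_nonneg _)).mp (hsum_kl m) |>.2
      · exact (GNF.summable_beta_natAbs (L := L) (δ := δ) hC.le n).mul_left δ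
    refine le_trans h1 ?_
    rw [tsum_mul_left]
    refine mul_le_mul_of_nonneg_left ?_ hδ0.le
    exact GNF.tsum_beta_natAbs_le hC.le hL0 hδ0.le n
  -- summability over the whole index set
  have hsumF : Summable (fun i : Fin M × ℤ × ℤ => ‖gaborCoef (⇑g) f (e i)‖^2) := by
    refine (summable_prod_of_nonneg (fun i => sq_nonneg _)).mpr ⟨fun m => hsum_kl m, ?_⟩
    exact Summable.of_finite
  have htot : ∑' i : Fin M × ℤ × ℤ, ‖gaborCoef (⇑g) f (e i)‖^2
      ≤ (M:ℝ) * (δ * (4*((n:ℝ)+1)*(L*δ)^2 + 6*Θ)) := by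
    rw [Summable.tsum_prod hsumF, tsum_fintype]
    have h1 : ∀ m ∈ Finset.univ (α := Fin M),
        ∑' kl : ℤ × ℤ, ‖gaborCoef (⇑g) f (e (m, kl))‖^2
          ≤ δ * (4*((n:ℝ)+1)*(L*δ)^2 + 6*Θ) := fun m _ => htsum_kl m
    refine le_trans (Finset.sum_le_sum h1) ?_
    rw [Finset.sum_const, Finset.card_univ, Fintype.card_fin, nsmul_eq_mul]
  -- the lower frame inequality
  have hint : ∫ t : ℝ, ‖f t‖^2 = ((2*n+1 : ℕ):ℝ) * δ := GNF.integral_ff_sq n hδ0.le hδ1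
  rw [hint] at hlow
  have hmain : A * (((2*n+1 : ℕ):ℝ) * δ) ≤ (M:ℝ) * (δ * (4*((n:ℝ)+1)*(L*δ)^2 + 6*Θ)) :=
    le_trans hlow htot
  -- derive the contradiction
  have hcast : ((2*n+1 : ℕ):ℝ) = 2*(n:ℝ)+1 := by push_cast; ring
  rw [hcast] at hmain
  have hδpos := hδ0
  nlinarith [hmain, hkey, hn1, hA, hδ0, hM0, hΘ0, hL0, (by positivity : (0:ℝ) ≤ (n:ℝ)),
    mul_pos hA hδ0, mul_le_mul_of_nonneg_right hkey (mul_nonneg hδ0.le (by positivity : (0:ℝ) ≤ (n:ℝ)+1)),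
    mul_lt_mul_of_pos_right hn1 hδ0]
end

section
/- For every x ∈ ℝ, ∑_{k∈ℤ} (8π(k−x)² − 1)·e^{−2π(k−x)²} = 2^{−1/2} · ∑_{k∈ℤ} (1 − 2πk²)·e^{−πk²/2}·cos(2πkx), where both series converge absolutely. (The left-hand side is the Zak transform Z(𝒟_{√2}^{−1} h_2)(x, 0) of the dilated second Hermite function g(t) = (8πt² − 1)e^{−2πt²}.) -/
open Real Complex MeasureTheory Filter Asymptotics FourierTransform Topology

noncomputable section

lemma gaussO (b c : ℝ) {a : ℝ} (ha : 0 < a) :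
    (fun t : ℝ => (b * t ^ 2 + c) * rexp (-a * t ^ 2)) =O[cocompact ℝ]
      (fun t : ℝ => |t| ^ (-2 : ℝ)) := by
  have h4 := tendsto_rpow_abs_mul_exp_neg_mul_sq_cocompact ha 4
  have h2 := tendsto_rpow_abs_mul_exp_neg_mul_sq_cocompact ha 2
  have hne : ∀ᶠ t : ℝ in cocompact ℝ, t ≠ 0 := by
    have : ({(0:ℝ)})ᶜ ∈ cocompact ℝ :=
      mem_cocompact.mpr ⟨{0}, isCompact_singleton, le_rfl⟩
    filter_upwards [this] with t ht using ht
  refine IsLittleO.isBigO ?_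
  have hz : ∀ᶠ t : ℝ in cocompact ℝ, |t| ^ (-2:ℝ) = 0 → (b * t ^ 2 + c) * rexp (-a * t ^ 2) = 0 := by
    filter_upwards [hne] with t ht h
    exact absurd h (by positivity)
  rw [isLittleO_iff_tendsto' hz]
  have key : Tendsto (fun t : ℝ => b * (|t| ^ (4:ℝ) * rexp (-a * t ^ 2))
      + c * (|t| ^ (2:ℝ) * rexp (-a * t ^ 2))) (cocompact ℝ) (𝓝 0) := by
    simpa using (h4.const_mul b).add (h2.const_mul c)
  refine key.congr' ?_
  filter_upwards [hne] with t ht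
  have habs : (0:ℝ) < |t| := abs_pos.mpr ht
  rw [Real.rpow_neg (abs_nonneg t)]
  rw [div_eq_mul_inv, inv_inv]
  have e4 : |t| ^ (4:ℝ) = t ^ 2 * t ^ 2 := by
    rw [show (4:ℝ) = ((4:ℕ):ℝ) by norm_num, Real.rpow_natCast]
    rw [show |t| ^ (4:ℕ) = (|t| ^ 2) ^ 2 by ring, _root_.sq_abs]
    ring
  have e2 : |t| ^ (2:ℝ) = t ^ 2 := by
    rw [show (2:ℝ) = ((2:ℕ):ℝ) by norm_num, Real.rpow_natCast, _root_.sq_abs]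
  rw [e4, e2]
  ring

lemma shiftTendsto (x : ℝ) :
    Tendsto (fun k : ℤ => (k : ℝ) - x) cofinite (cocompact ℝ) := by
  have h1 : Tendsto (⇑(Homeomorph.subRight x)) (cocompact ℝ) (cocompact ℝ) := by
    exact Filter.Tendsto.mono_right tendsto_map
      (le_of_eq ((Homeomorph.subRight x).map_cocompact))
  have := h1.comp Int.tendsto_coe_cofinite
  simpa [Function.comp_def, Homeomorph.subRight] using this

lemma absTendsto (x : ℝ) :
    Tendsto (fun k : ℤ => |(k : ℝ)|) cofinite atTop := by
  have := tendsto_norm_cocompact_atTop.comp Int.tendsto_coe_cofinite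
  simpa [Function.comp_def, Real.norm_eq_abs] using this

lemma shiftO (x : ℝ) :
    (fun k : ℤ => |(k : ℝ) - x| ^ (-2 : ℝ)) =O[cofinite]
      (fun k : ℤ => |(k : ℝ)| ^ (-2 : ℝ)) := by
  have hrw : ∀ w : ℝ, 0 ≤ w → w ^ (-2 : ℝ) = (w ^ 2)⁻¹ := fun w hw => by
    rw [show (-2 : ℝ) = -((2:ℕ):ℝ) by norm_num, Real.rpow_neg hw, Real.rpow_natCast]
  refine IsBigO.of_bound 4 ?_
  filter_upwards [(absTendsto x).eventually_ge_atTop (2 * |x| + 2)] with k hk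
  set v := |(k:ℝ)| with hv
  set u := |(k:ℝ) - x| with hu
  have hxb : |x| ≤ (v - 2) / 2 := by linarith
  have huv : v / 2 ≤ u := by
    have : v ≤ u + |x| := by
      calc v = |((k:ℝ) - x) + x| := by rw [hv]; ring_nf
      _ ≤ u + |x| := abs_add_le _ _
    linarith
  have hupos : 0 < u := by linarith [abs_nonneg x]
  have hvpos : 0 < v := by linarith [abs_nonneg x]
  rw [Real.norm_eq_abs, Real.norm_eq_abs, _root_.abs_of_nonneg (Real.rpow_nonneg (abs_nonneg _) _),
    _root_.abs_of_nonneg (Real.rpow_nonneg (abs_nonneg _) _), hrw u hupos.le, hrw v hvpos.le]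
  rw [show (4 : ℝ) * (v ^ 2)⁻¹ = (v ^ 2 / 4)⁻¹ by field_simp]
  apply inv_anti₀
  · positivity
  · calc v ^ 2 / 4 = (v / 2) ^ 2 := by ring
    _ ≤ u ^ 2 := by nlinarith

lemma sumAbs (b c : ℝ) {a : ℝ} (ha : 0 < a) (x : ℝ) :
    Summable fun k : ℤ => |(b * ((k:ℝ) - x) ^ 2 + c) * rexp (-a * ((k:ℝ) - x) ^ 2)| := by
  apply summable_of_isBigO (Real.summable_abs_int_rpow one_lt_two)
  have h := ((gaussO b c ha).comp_tendsto (shiftTendsto x)).trans (shiftO x)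
  simpa [Function.comp] using h.abs_left

lemma int_sq_gauss {b : ℂ} (hb : 0 < b.re) :
    Integrable fun x : ℝ => (x:ℂ) ^ 2 * cexp (-b * (x:ℂ) ^ 2) := by
  have R : Integrable fun x : ℝ => x ^ 2 * rexp (-b.re * x ^ 2) := by
    have := integrable_rpow_mul_exp_neg_mul_sq hb (s := 2) (by norm_num)
    have e : ∀ x : ℝ, x ^ (2:ℝ) = x ^ (2:ℕ) := fun x => by
      rw [show (2:ℝ) = ((2:ℕ):ℝ) by norm_num, Real.rpow_natCast]
    simpa only [e] using this
  refine ⟨Continuous.aestronglyMeasurable ?_, ?_⟩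
  · exact (Complex.continuous_ofReal.pow 2).mul
      (Complex.continuous_exp.comp (continuous_const.mul (Complex.continuous_ofReal.pow 2)))
  · rw [← hasFiniteIntegral_norm_iff]
    have hn : (fun x : ℝ => ‖(x:ℂ) ^ 2 * cexp (-b * (x:ℂ) ^ 2)‖)
        = fun x : ℝ => x ^ 2 * rexp (-b.re * x ^ 2) := by
      funext x
      rw [norm_mul, norm_pow, Complex.norm_real, Real.norm_eq_abs, _root_.sq_abs, norm_cexp_neg_mul_sq]
    rw [hn]
    exact R.hasFiniteIntegral

lemma Fsub {g h : ℝ → ℂ} (hg : Integrable g) (hh : Integrable h) (a : ℂ) :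
    𝓕 (fun x : ℝ => a * g x - h x) = fun w => a * 𝓕 g w - 𝓕 h w := by
  have key : ∀ (u : ℝ → ℂ), Integrable u → ∀ w : ℝ,
      Integrable (fun v : ℝ => cexp (↑(-2 * π * v * w) * I) * u v) := by
    intro u hu w
    refine hu.bdd_mul (c := 1) ?_ (Filter.Eventually.of_forall fun v => ?_)
    · apply Continuous.aestronglyMeasurable
      exact Complex.continuous_exp.comp ((Complex.continuous_ofReal.comp (by continuity)).mul
        continuous_const)
    · rw [Complex.norm_exp_ofReal_mul_I]
  funext w
  rw [Real.fourier_real_eq_integral_exp_smul,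
    Real.fourier_real_eq_integral_exp_smul,
    Real.fourier_real_eq_integral_exp_smul]
  simp only [smul_eq_mul]
  have e1 : (fun v : ℝ => cexp (↑(-2 * π * v * w) * I) * (a * g v - h v))
      = fun v : ℝ => a * (cexp (↑(-2 * π * v * w) * I) * g v)
        - cexp (↑(-2 * π * v * w) * I) * h v := by
    funext v; ring
  rw [e1, integral_sub ((key g hg w).const_mul a) (key h hh w), MeasureTheory.integral_const_mul]

lemma hasD1 (t : ℝ) :
    HasDerivAt (fun s : ℝ => cexp (-↑π / 2 * (s:ℂ) ^ 2))
      ((-↑π * t) * cexp (-↑π / 2 * (t:ℂ) ^ 2)) t := by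
  have h0 : HasDerivAt (fun z : ℂ => -↑π / 2 * z ^ 2) (-↑π / 2 * (2 * (t:ℂ))) (t:ℂ) := by
    simpa using (hasDerivAt_pow 2 ((t:ℂ))).const_mul (-(π:ℂ) / 2)
  have h1 := (h0.comp_ofReal).cexp
  convert h1 using 1
  push_cast
  ring

lemma hasD2 (t : ℝ) :
    HasDerivAt (fun s : ℝ => (-↑π * (s:ℂ)) * cexp (-↑π / 2 * (s:ℂ) ^ 2))
      ((-↑π + ↑π ^ 2 * (t:ℂ) ^ 2) * cexp (-↑π / 2 * (t:ℂ) ^ 2)) t := by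
  have ha : HasDerivAt (fun s : ℝ => -(π:ℂ) * (s:ℂ)) (-↑π) t := by
    simpa using ((hasDerivAt_id ((t:ℂ))).const_mul (-(π:ℂ))).comp_ofReal
  have : HasDerivAt (fun s : ℝ => (-↑π * (s:ℂ)) * cexp (-↑π / 2 * (s:ℂ) ^ 2)) _ t :=
    ha.mul (hasD1 t)
  convert this using 1
  push_cast
  ring

lemma Ffmain :
    𝓕 (fun x : ℝ => ((8 * π * x ^ 2 - 1 : ℝ) : ℂ) * cexp (-↑π * 2 * (x:ℂ) ^ 2))
      = fun t : ℝ => (1 / (2:ℂ) ^ (1 / 2 : ℂ)) *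
          ((1 - 2 * ↑π * (t:ℂ) ^ 2) * cexp (-↑π / 2 * (t:ℂ) ^ 2)) := by
  set c0 : ℂ := 1 / (2:ℂ) ^ (1 / 2 : ℂ) with hc0
  set φ : ℝ → ℂ := fun x : ℝ => cexp (-↑π * 2 * (x:ℂ) ^ 2) with hφ
  have hFφ : 𝓕 φ = fun t : ℝ => c0 * cexp (-↑π / 2 * (t:ℂ) ^ 2) :=
    fourier_gaussian_pi (b := 2) (by norm_num)
  have hb : 0 < ((↑π * 2 : ℂ)).re := by
    simp only [Complex.mul_re, Complex.ofReal_re, Complex.ofReal_im]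
    norm_num [pi_pos]
  have hφi : Integrable φ := by
    have := integrable_cexp_neg_mul_sq hb
    rw [hφ]
    simp only [neg_mul] at this ⊢
    exact this
  have hxφi : Integrable (fun x : ℝ => x • φ x) := by
    have := integrable_mul_cexp_neg_mul_sq hb
    simp only [hφ, Complex.real_smul]
    simp only [neg_mul] at this ⊢
    exact this
  set ψ1 : ℝ → ℂ := fun x : ℝ => (-2 * ↑π * I * x) • φ x with hψ1
  have hψ1i : Integrable ψ1 := by
    have h1 : ψ1 = fun x : ℝ => (-2 * ↑π * I) * ((x:ℂ) * φ x) := by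
      funext x; simp only [hψ1, smul_eq_mul]; ring
    rw [h1]
    refine Integrable.const_mul ?_ _
    have := integrable_mul_cexp_neg_mul_sq hb
    rw [hφ]
    simp only [neg_mul] at this ⊢
    exact this
  have hxψ1i : Integrable (fun x : ℝ => x • ψ1 x) := by
    have h1 : (fun x : ℝ => x • ψ1 x)
        = fun x : ℝ => (-2 * ↑π * I) * ((x:ℂ) ^ 2 * cexp (-(↑π * 2) * (x:ℂ) ^ 2)) := by
      funext x
      simp only [hψ1, hφ, smul_eq_mul, Complex.real_smul, neg_mul]
      ring
    rw [h1]
    exact Integrable.const_mul (int_sq_gauss hb) _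
  have F1 : deriv (𝓕 φ) = 𝓕 ψ1 := Real.deriv_fourier hφi hxφi
  have F2 : deriv (𝓕 ψ1) = 𝓕 (fun x : ℝ => (-2 * ↑π * I * x) • ψ1 x) :=
    Real.deriv_fourier hψ1i hxψ1i
  have D1 : deriv (𝓕 φ) = fun t : ℝ => c0 * ((-↑π * t) * cexp (-↑π / 2 * (t:ℂ) ^ 2)) := by
    rw [hFφ]
    funext t
    exact (((hasD1 t).const_mul c0)).deriv
  have D2 : 𝓕 (fun x : ℝ => (-2 * ↑π * I * x) • ψ1 x)
      = fun t : ℝ => c0 * ((-↑π + ↑π ^ 2 * (t:ℂ) ^ 2) * cexp (-↑π / 2 * (t:ℂ) ^ 2)) := by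
    rw [← F2, ← F1, D1]
    funext t
    have := ((hasD2 t).const_mul c0).deriv
    simpa [mul_assoc] using this
  have hgi : Integrable (fun x : ℝ => (-2 * ↑π * I * x) • ψ1 x) := by
    have h1 : (fun x : ℝ => (-2 * ↑π * I * x) • ψ1 x)
        = fun x : ℝ => (-2 * ↑π * I) * (x • ψ1 x) := by
      funext x
      simp only [smul_eq_mul, Complex.real_smul]
      ring
    rw [h1]
    exact hxψ1i.const_mul _
  have hfdecomp : (fun x : ℝ => ((8 * π * x ^ 2 - 1 : ℝ) : ℂ) * cexp (-↑π * 2 * (x:ℂ) ^ 2))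
      = fun x : ℝ => (-2 / ↑π : ℂ) * ((-2 * ↑π * I * x) • ψ1 x) - φ x := by
    funext x
    simp only [hψ1, hφ, smul_eq_mul]
    have hπ : (π:ℂ) ≠ 0 := Complex.ofReal_ne_zero.mpr pi_ne_zero
    push_cast
    field_simp
    ring_nf
    rw [I_sq]
    ring
  rw [hfdecomp, Fsub hgi hφi, D2, hFφ]
  funext t
  have hπ : (π:ℂ) ≠ 0 := Complex.ofReal_ne_zero.mpr pi_ne_zero
  field_simp
  ring

lemma c0_eq : (1 / (2:ℂ) ^ (1 / 2 : ℂ)) = (((2:ℝ) ^ (-(1:ℝ)/2) : ℝ) : ℂ) := by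
  have h1 : ((2:ℂ) ^ (1 / 2 : ℂ)) = (((2:ℝ) ^ ((1:ℝ)/2) : ℝ) : ℂ) := by
    rw [Complex.ofReal_cpow (by norm_num : (0:ℝ) ≤ 2)]
    norm_num
  rw [h1, show (-(1:ℝ)/2) = -((1:ℝ)/2) by ring, Real.rpow_neg (by norm_num : (0:ℝ) ≤ 2)]
  rw [Complex.ofReal_inv, one_div]

lemma freal (t : ℝ) :
    ((8 * π * t ^ 2 - 1 : ℝ) : ℂ) * cexp (-↑π * 2 * (t:ℂ) ^ 2)
      = (((8 * π * t ^ 2 - 1) * rexp (-2 * π * t ^ 2) : ℝ) : ℂ) := by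
  rw [Complex.ofReal_mul, Complex.ofReal_exp]
  congr 2
  push_cast
  ring

lemma Ffreal (t : ℝ) :
    𝓕 (fun x : ℝ => ((8 * π * x ^ 2 - 1 : ℝ) : ℂ) * cexp (-↑π * 2 * (x:ℂ) ^ 2)) t
      = (((2:ℝ) ^ (-(1:ℝ)/2) * ((1 - 2 * π * t ^ 2) * rexp (-π * t ^ 2 / 2)) : ℝ) : ℂ) := by
  rw [Ffmain, c0_eq]
  rw [Complex.ofReal_mul, Complex.ofReal_mul, Complex.ofReal_exp]
  congr 2
  push_cast
  ring


/-- `∑_(k∈ℤ) (8π(k−x)² − 1) e^(−2π(k−x)²) = 2^(−1/2) ∑_(k∈ℤ) (1 − 2πk²) e^(−πk²/2) cos(2πkx)`,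
both series converging absolutely. The left-hand side is the Zak transform
`Z(𝒟_√2⁻¹ h₂)(x, 0)` of the dilated second Hermite function `g(t) = (8πt² − 1)e^(−2πt²)`. -/
theorem zak_dilated_h2_cosine_series (x : ℝ) :
    Summable (fun k : ℤ =>
      |(8 * Real.pi * ((k : ℝ) - x) ^ 2 - 1) * Real.exp (-2 * Real.pi * ((k : ℝ) - x) ^ 2)|) ∧
    Summable (fun k : ℤ =>
      |(1 - 2 * Real.pi * (k : ℝ) ^ 2) * Real.exp (-Real.pi * (k : ℝ) ^ 2 / 2) *
        Real.cos (2 * Real.pi * (k : ℝ) * x)|) ∧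
    ∑' k : ℤ, (8 * Real.pi * ((k : ℝ) - x) ^ 2 - 1) * Real.exp (-2 * Real.pi * ((k : ℝ) - x) ^ 2)
      = 2 ^ (-(1 : ℝ) / 2) *
        ∑' k : ℤ, (1 - 2 * Real.pi * (k : ℝ) ^ 2) * Real.exp (-Real.pi * (k : ℝ) ^ 2 / 2) *
          Real.cos (2 * Real.pi * (k : ℝ) * x) := by
  have S1 : Summable (fun k : ℤ =>
      |(8 * π * ((k : ℝ) - x) ^ 2 - 1) * rexp (-2 * π * ((k : ℝ) - x) ^ 2)|) := by
    have h := sumAbs (8 * π) (-1) (a := 2 * π) (by positivity) x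
    refine h.congr fun k => ?_
    congr 2
    ring_nf
  have S2' : Summable (fun k : ℤ =>
      |(1 - 2 * π * (k : ℝ) ^ 2) * rexp (-π * (k : ℝ) ^ 2 / 2)|) := by
    have h := sumAbs (-2 * π) 1 (a := π / 2) (by positivity) 0
    refine h.congr fun k => ?_
    congr 2
    · ring
    · congr 1; ring
  have S2 : Summable (fun k : ℤ =>
      |(1 - 2 * π * (k : ℝ) ^ 2) * rexp (-π * (k : ℝ) ^ 2 / 2) *
        Real.cos (2 * π * (k : ℝ) * x)|) := by
    refine Summable.of_nonneg_of_le (fun k => abs_nonneg _) (fun k => ?_) S2'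
    rw [abs_mul]
    exact mul_le_of_le_one_right (abs_nonneg _) (abs_cos_le_one _)
  refine ⟨S1, S2, ?_⟩
  -- Poisson summation
  set f : ℝ → ℂ := fun t : ℝ => ((8 * π * t ^ 2 - 1 : ℝ) : ℂ) * cexp (-↑π * 2 * (t:ℂ) ^ 2)
    with hf
  have hc : Continuous f := by
    apply Continuous.mul
    · exact Complex.continuous_ofReal.comp (by continuity)
    · apply Complex.continuous_exp.comp
      exact (continuous_const.mul (Complex.continuous_ofReal.pow 2))
  have hfO : f =O[cocompact ℝ] (fun t : ℝ => |t| ^ (-2:ℝ)) := by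
    refine (Asymptotics.isBigO_of_le (cocompact ℝ) fun t => ?_).trans
      (gaussO (8 * π) 1 (a := 2 * π) (by positivity))
    rw [hf]
    simp only []
    rw [freal t, Complex.norm_real, Real.norm_eq_abs, Real.norm_eq_abs]
    rw [show -(2 * π) * t ^ 2 = -2 * π * t ^ 2 from by ring]
    simp only [abs_mul, Real.abs_exp]
    apply mul_le_mul_of_nonneg_right _ (Real.exp_pos _).le
    rw [_root_.abs_of_nonneg (by positivity : (0:ℝ) ≤ 8 * π * t ^ 2 + 1)]
    exact abs_le.mpr ⟨by nlinarith [sq_nonneg t, pi_pos.le], by nlinarith [sq_nonneg t, pi_pos.le]⟩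
  have hFfO : (𝓕 f) =O[cocompact ℝ] (fun t : ℝ => |t| ^ (-2:ℝ)) := by
    refine (Asymptotics.isBigO_of_le (cocompact ℝ) fun t => ?_).trans
      (gaussO (2 * π) 1 (a := π / 2) (by positivity))
    rw [hf, Ffreal t, Complex.norm_real, Real.norm_eq_abs, Real.norm_eq_abs]
    rw [show -(π / 2) * t ^ 2 = -π * t ^ 2 / 2 from by ring]
    simp only [abs_mul, Real.abs_exp]
    rw [_root_.abs_of_nonneg (Real.rpow_nonneg (by norm_num : (0:ℝ) ≤ 2) _)]
    have h1 : (2:ℝ) ^ (-(1:ℝ)/2) ≤ 1 :=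
      Real.rpow_le_one_of_one_le_of_nonpos (by norm_num) (by norm_num)
    have h2 : |1 - 2 * π * t ^ 2| ≤ |2 * π * t ^ 2 + 1| := by
      rw [_root_.abs_of_nonneg (by positivity : (0:ℝ) ≤ 2 * π * t ^ 2 + 1)]
      exact abs_le.mpr ⟨by nlinarith [sq_nonneg t, pi_pos.le],
        by nlinarith [sq_nonneg t, pi_pos.le]⟩
    calc (2:ℝ) ^ (-(1:ℝ)/2) * (|1 - 2 * π * t ^ 2| * rexp (-π * t ^ 2 / 2))
        ≤ 1 * (|2 * π * t ^ 2 + 1| * rexp (-π * t ^ 2 / 2)) := by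
          apply mul_le_mul h1 (mul_le_mul_of_nonneg_right h2 (Real.exp_pos _).le)
            (by positivity) (by norm_num)
      _ = |2 * π * t ^ 2 + 1| * rexp (-π * t ^ 2 / 2) := by ring
  have P := Real.tsum_eq_tsum_fourier_of_rpow_decay hc one_lt_two hfO hFfO (-x)
  have hsum : Summable (fun n : ℤ => 𝓕 f n * fourier n ((-x : ℝ) : UnitAddCircle)) := by
    apply Summable.of_norm
    have hn : ∀ n : ℤ, ‖𝓕 f n * fourier n ((-x:ℝ) : UnitAddCircle)‖
        = (2:ℝ) ^ (-(1:ℝ)/2) * |(1 - 2 * π * (n:ℝ) ^ 2) * rexp (-π * (n:ℝ) ^ 2 / 2)| := by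
      intro n
      rw [norm_mul, (show ‖fourier n ((-x:ℝ) : UnitAddCircle)‖ = 1 from Circle.norm_coe _),
        mul_one, hf, Ffreal, Complex.norm_real, Real.norm_eq_abs, abs_mul,
        _root_.abs_of_nonneg (Real.rpow_nonneg (by norm_num : (0:ℝ) ≤ 2) _)]
    simp only [hn]
    exact S2'.mul_left _
  have hL : (∑' n : ℤ, f (-x + n)) = ((∑' k : ℤ,
      (8 * π * ((k:ℝ) - x) ^ 2 - 1) * rexp (-2 * π * ((k:ℝ) - x) ^ 2) : ℝ) : ℂ) := by
    rw [Complex.ofReal_tsum]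
    congr 1
    funext n
    rw [hf]
    simp only []
    rw [freal (-x + n), Complex.ofReal_inj, show -x + (n:ℝ) = (n:ℝ) - x from by ring]
  have hterm : ∀ n : ℤ, (𝓕 f n * fourier n ((-x:ℝ) : UnitAddCircle)).re
      = (2:ℝ) ^ (-(1:ℝ)/2) * ((1 - 2 * π * (n:ℝ) ^ 2) * rexp (-π * (n:ℝ) ^ 2 / 2) *
          Real.cos (2 * π * (n:ℝ) * x)) := by
    intro n
    rw [hf, Ffreal ((n:ℤ):ℝ), Complex.re_ofReal_mul, fourier_coe_apply]
    have harg : 2 * ↑π * I * (n:ℂ) * ((-x : ℝ) : ℂ) / ((1:ℝ) : ℂ)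
        = ((-(2 * π * (n:ℝ) * x) : ℝ) : ℂ) * I := by
      push_cast
      ring
    rw [harg, Complex.exp_ofReal_mul_I_re, Real.cos_neg]
    ring
  calc ∑' k : ℤ, (8 * π * ((k:ℝ) - x) ^ 2 - 1) * rexp (-2 * π * ((k:ℝ) - x) ^ 2)
      = (∑' n : ℤ, f (-x + n)).re := by rw [hL, Complex.ofReal_re]
    _ = (∑' n : ℤ, 𝓕 f n * fourier n ((-x:ℝ) : UnitAddCircle)).re := by rw [P]
    _ = ∑' n : ℤ, (𝓕 f n * fourier n ((-x:ℝ) : UnitAddCircle)).re := Complex.re_tsum hsum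
    _ = ∑' n : ℤ, (2:ℝ) ^ (-(1:ℝ)/2) * ((1 - 2 * π * (n:ℝ) ^ 2) * rexp (-π * (n:ℝ) ^ 2 / 2) *
          Real.cos (2 * π * (n:ℝ) * x)) := by
        congr 1
        funext n
        exact hterm n
    _ = (2:ℝ) ^ (-(1:ℝ)/2) * ∑' n : ℤ, (1 - 2 * π * (n:ℝ) ^ 2) * rexp (-π * (n:ℝ) ^ 2 / 2) *
          Real.cos (2 * π * (n:ℝ) * x) := tsum_mul_left
end
end

section
/- The series ∑_{k∈ℤ} (1 − 2πk²)·e^{−πk²/2} converges absolutely and its sum is strictly negative. -/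
open Real

lemma aux_nat_summable :
    Summable (fun n : ℕ => (1 + 2 * π * (n : ℝ) ^ 2) * Real.exp (-(π/2) * n)) := by
  have h0 := summable_pow_mul_exp_neg_nat_mul 0 (r := π/2) (by positivity)
  have h2 := summable_pow_mul_exp_neg_nat_mul 2 (r := π/2) (by positivity)
  have := (h0.add (h2.mul_left (2 * π)))
  apply this.congr
  intro n

  ring

lemma abs_le_aux (k : ℤ) :
    |(1 - 2 * π * (k : ℝ) ^ 2) * Real.exp (-π * (k : ℝ) ^ 2 / 2)| ≤
      (1 + 2 * π * (k : ℝ) ^ 2) * Real.exp (-(π/2) * |(k : ℝ)|) := by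
  rw [abs_mul, Real.abs_exp]
  have hk2 : |(k : ℝ)| ≤ (k : ℝ) ^ 2 := by
    rcases eq_or_ne k 0 with rfl | h
    · simp
    · have h1 : (1 : ℝ) ≤ |(k : ℝ)| := by
        rw [← Int.cast_abs]
        exact_mod_cast Int.one_le_abs h
      calc |(k : ℝ)| = 1 * |(k : ℝ)| := by ring
        _ ≤ |(k : ℝ)| * |(k : ℝ)| := by nlinarith
        _ = (k : ℝ) ^ 2 := by rw [← abs_mul, ← sq, abs_sq]
  gcongr
  · have : (0:ℝ) ≤ 2 * π * (k : ℝ) ^ 2 := by positivity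
    calc |1 - 2 * π * (k : ℝ) ^ 2| ≤ |(1:ℝ)| + |2 * π * (k : ℝ) ^ 2| := abs_sub _ _
      _ = 1 + 2 * π * (k : ℝ) ^ 2 := by rw [abs_one, abs_of_nonneg this]
  · nlinarith [Real.pi_pos]

/-- The series `∑_(k∈ℤ) (1 − 2πk²) e^(−πk²/2)` converges absolutely and its sum is strictly
negative. -/
theorem sum_neg :
    Summable (fun k : ℤ => |(1 - 2 * Real.pi * (k : ℝ) ^ 2) * Real.exp (-Real.pi * (k : ℝ) ^ 2 / 2)|) ∧
    ∑' k : ℤ, (1 - 2 * Real.pi * (k : ℝ) ^ 2) * Real.exp (-Real.pi * (k : ℝ) ^ 2 / 2) < 0 := by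
  have hgs : Summable (fun k : ℤ => (1 + 2 * π * (k : ℝ) ^ 2) * Real.exp (-(π/2) * |(k : ℝ)|)) := by
    apply Summable.of_nat_of_neg
    · apply aux_nat_summable.congr
      intro n; simp
    · apply aux_nat_summable.congr
      intro n
      push_cast
      rw [abs_neg, abs_of_nonneg (by positivity : (0:ℝ) ≤ (n:ℝ))]
      ring
  have hs : Summable (fun k : ℤ => |(1 - 2 * π * (k : ℝ) ^ 2) * Real.exp (-π * (k : ℝ) ^ 2 / 2)|) :=
    Summable.of_nonneg_of_le (fun k => abs_nonneg _) abs_le_aux hgs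
  refine ⟨hs, ?_⟩
  have hf : Summable (fun k : ℤ => (1 - 2 * π * (k : ℝ) ^ 2) * Real.exp (-π * (k : ℝ) ^ 2 / 2)) :=
    hs.of_abs
  set f : ℤ → ℝ := fun k => (1 - 2 * π * (k : ℝ) ^ 2) * Real.exp (-π * (k : ℝ) ^ 2 / 2) with hfdef
  have key := Summable.sum_add_tsum_compl (s := ({-1, 0, 1} : Finset ℤ)) hf
  rw [← key]
  have hcompl : ∑' (k : ↑(({-1, 0, 1} : Finset ℤ) : Set ℤ)ᶜ), f k ≤ 0 := by
    apply tsum_nonpos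
    rintro ⟨k, hk⟩
    simp only [Set.mem_compl_iff, Finset.coe_insert, Set.mem_insert_iff, Finset.coe_singleton,
      Set.mem_singleton_iff, not_or] at hk
    have hk0 : k ≠ 0 := hk.2.1
    have h1 : (1:ℝ) ≤ (k : ℝ) ^ 2 := by
      have := Int.one_le_abs hk0
      have : (1:ℝ) ≤ |(k:ℝ)| := by rw [← Int.cast_abs]; exact_mod_cast this
      nlinarith [abs_nonneg (k:ℝ), sq_abs (k:ℝ)]
    have hneg : 1 - 2 * π * (k : ℝ) ^ 2 ≤ 0 := by nlinarith [Real.pi_gt_three]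
    exact mul_nonpos_of_nonpos_of_nonneg hneg (Real.exp_nonneg _)
  have hsum : ∑ k ∈ ({-1, 0, 1} : Finset ℤ), f k < 0 := by
    have : ∑ k ∈ ({-1, 0, 1} : Finset ℤ), f k = f (-1) + f 0 + f 1 := by
      rw [show ({-1, 0, 1} : Finset ℤ) = {-1} ∪ {0} ∪ {1} by rfl]
      rw [Finset.sum_union (by decide), Finset.sum_union (by decide)]
      simp
    rw [this]
    have e0 : f 0 = 1 := by simp [hfdef]
    have e1 : f 1 = (1 - 2 * π) * Real.exp (-π / 2) := by norm_num [hfdef]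
    have em : f (-1) = (1 - 2 * π) * Real.exp (-π / 2) := by norm_num [hfdef]
    rw [e0, e1, em]
    set E := Real.exp (-π / 2) with hEdef
    have hEpos : 0 < E := Real.exp_pos _
    have hmul : E * Real.exp (π / 2) = 1 := by
      rw [hEdef, ← Real.exp_add, show -π / 2 + π / 2 = 0 by ring, Real.exp_zero]
    have hle : Real.exp (π / 2) ≤ Real.exp 2 := Real.exp_le_exp.mpr (by nlinarith [Real.pi_le_four])
    have hE2 : 1 ≤ E * Real.exp 2 := by nlinarith [Real.exp_pos (π/2)]
    have hexp2 : Real.exp 2 < 7.39 := by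
      have h2 : Real.exp 2 = Real.exp 1 * Real.exp 1 := by rw [← Real.exp_add]; norm_num
      nlinarith [Real.exp_one_lt_d9, Real.exp_pos 1]
    nlinarith [Real.pi_gt_three, Real.exp_pos 2]
  linarith
end

section
/- The series ∑_{k∈ℤ} (−1)^k·(1 − 2πk²)·e^{−πk²/2} converges absolutely and its sum is strictly positive. -/
set_option maxHeartbeats 1000000
open Real
noncomputable def Taux (k : ℤ) : ℝ :=
  (-1 : ℝ) ^ k * (1 - 2 * Real.pi * (k : ℝ) ^ 2) * Real.exp (-Real.pi * (k : ℝ) ^ 2 / 2)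

lemma Taux_abs (k : ℤ) :
    |Taux k| = |1 - 2 * Real.pi * (k : ℝ) ^ 2| * Real.exp (-Real.pi * (k : ℝ) ^ 2 / 2) := by
  have h1 : |(-1 : ℝ) ^ k| = 1 := by
    rcases Int.even_or_odd k with h | h
    · rw [h.neg_one_zpow]; norm_num
    · rw [h.neg_one_zpow]; norm_num
  rw [Taux, abs_mul, abs_mul, h1, one_mul, Real.abs_exp]

lemma Taux_even (k : ℤ) : Taux (-k) = Taux k := by
  have h : ((-1 : ℝ) ^ k)⁻¹ = (-1) ^ k := by
    rcases Int.even_or_odd k with h | h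
    · rw [h.neg_one_zpow]; norm_num
    · rw [h.neg_one_zpow]; norm_num
  simp [Taux, zpow_neg, h, neg_sq]

lemma Taux_bound (n : ℕ) : |Taux ((n : ℤ) + 2)| ≤ 16 * Real.exp (-2) ^ (n + 2) := by
  have hx0 : (0:ℝ) ≤ (n:ℝ) + 2 := by positivity
  have hx : (2:ℝ) ≤ (n:ℝ) + 2 := by linarith [Nat.cast_nonneg (α:=ℝ) n]
  set x : ℝ := (n:ℝ) + 2 with hxdef
  have hcast : (((n : ℤ) + 2 : ℤ) : ℝ) = x := by push_cast; ring
  rw [Taux_abs, hcast]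
  have hπ3 : (3:ℝ) ≤ π := Real.pi_gt_three.le
  have hπ4 : π ≤ 4 := Real.pi_le_four
  have h1 : |1 - 2 * π * x ^ 2| ≤ 8 * x ^ 2 := by
    rw [abs_sub_comm, abs_of_nonneg (by nlinarith)]
    nlinarith
  have h2 : x ^ 2 ≤ 2 * Real.exp x := by
    have := Real.quadratic_le_exp_of_nonneg hx0
    nlinarith
  have h3 : Real.exp (-π * x ^ 2 / 2) ≤ Real.exp (-(3 * x)) := by
    apply Real.exp_le_exp.mpr
    nlinarith
  calc |1 - 2 * π * x ^ 2| * Real.exp (-π * x ^ 2 / 2)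
      ≤ (8 * x ^ 2) * Real.exp (-(3 * x)) :=
        mul_le_mul h1 h3 (Real.exp_pos _).le (by positivity)
    _ ≤ (16 * Real.exp x) * Real.exp (-(3 * x)) := by
        have := (Real.exp_pos (-(3 * x))).le
        nlinarith
    _ = 16 * Real.exp (-2 * x) := by
        rw [mul_assoc, ← Real.exp_add]; ring_nf
    _ = 16 * Real.exp (-2) ^ (n + 2) := by
        rw [← Real.exp_nat_mul]
        congr 1
        push_cast [hxdef]
        ring

lemma Taux_tail_abs_summable : Summable (fun n : ℕ => |Taux ((n : ℤ) + 2)|) := by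
  apply Summable.of_nonneg_of_le (fun n => abs_nonneg _) Taux_bound
  have hr1 : Real.exp (-2) < 1 := Real.exp_lt_one_iff.mpr (by norm_num)
  have hr0 : (0:ℝ) ≤ Real.exp (-2) := (Real.exp_pos _).le
  have : Summable (fun n : ℕ => (16 * Real.exp (-2) ^ 2) * Real.exp (-2) ^ n) :=
    (summable_geometric_of_lt_one hr0 hr1).mul_left _
  apply this.congr
  intro n
  rw [pow_add]
  ring

lemma Taux_abs_nat_summable : Summable (fun n : ℕ => |Taux (n : ℤ)|) := by
  rw [← summable_nat_add_iff 2]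
  apply Taux_tail_abs_summable.congr
  intro n
  push_cast
  ring_nf

set_option maxHeartbeats 800000 in
lemma Taux_abs_summable : Summable (fun k : ℤ => |Taux k|) := by
  apply Summable.of_nat_of_neg_add_one Taux_abs_nat_summable
  have h := (summable_nat_add_iff (f := fun n : ℕ => |Taux (n : ℤ)|) 1).mpr Taux_abs_nat_summable
  apply h.congr
  intro n
  have := Taux_even ((n:ℤ) + 1)
  push_cast
  rw [this]

lemma Taux_nat_summable : Summable (fun n : ℕ => Taux (n : ℤ)) :=
  Taux_abs_nat_summable.of_abs

lemma Taux_tail_summable : Summable (fun n : ℕ => Taux ((n : ℤ) + 2)) :=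
  Taux_tail_abs_summable.of_abs

lemma Taux_shift_summable : Summable (fun n : ℕ => Taux ((n : ℤ) + 1)) := by
  have h := (summable_nat_add_iff (f := fun n : ℕ => Taux (n : ℤ)) 1).mpr Taux_nat_summable
  apply h.congr
  intro n
  push_cast
  ring_nf

lemma Taux_tsum_eq :
    ∑' k : ℤ, Taux k = 1 + 2 * Taux 1 + 2 * ∑' n : ℕ, Taux ((n : ℤ) + 2) := by
  have hneg : Summable (fun n : ℕ => Taux (-((n : ℤ) + 1))) := by
    apply Taux_shift_summable.congr
    intro n
    rw [Taux_even]
  rw [tsum_of_nat_of_neg_add_one Taux_nat_summable hneg]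
  have e1 : ∑' n : ℕ, Taux (-((n : ℤ) + 1)) = ∑' n : ℕ, Taux ((n : ℤ) + 1) :=
    tsum_congr fun n => Taux_even _
  have e2 : ∑' n : ℕ, Taux (n : ℤ) = Taux 0 + ∑' n : ℕ, Taux ((n : ℤ) + 1) := by
    rw [Summable.tsum_eq_zero_add Taux_nat_summable]
    norm_num
  have e3 : ∑' n : ℕ, Taux ((n : ℤ) + 1) = Taux 1 + ∑' n : ℕ, Taux ((n : ℤ) + 2) := by
    rw [Summable.tsum_eq_zero_add Taux_shift_summable]
    norm_num
    exact tsum_congr fun n => by congr 1; try ring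
  have h0 : Taux 0 = 1 := by simp [Taux]
  rw [e1, e2, e3, h0]
  ring

lemma Taux_one_nonneg : 0 ≤ Taux 1 := by
  have h1 : Taux 1 = (2 * π - 1) * Real.exp (-π / 2) := by
    simp [Taux]
    try ring
  rw [h1]
  have := Real.pi_gt_three
  have := (Real.exp_pos (-π / 2)).le
  nlinarith

lemma Taux_tail_bound :
    |∑' n : ℕ, Taux ((n : ℤ) + 2)| ≤ 16 * Real.exp (-2) ^ 2 * (1 - Real.exp (-2))⁻¹ := by
  have hr1 : Real.exp (-2) < 1 := Real.exp_lt_one_iff.mpr (by norm_num)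
  have hr0 : (0:ℝ) ≤ Real.exp (-2) := (Real.exp_pos _).le
  have hsum : Summable (fun n : ℕ => (16 * Real.exp (-2) ^ 2) * Real.exp (-2) ^ n) :=
    (summable_geometric_of_lt_one hr0 hr1).mul_left _
  calc |∑' n : ℕ, Taux ((n : ℤ) + 2)| ≤ ∑' n : ℕ, |Taux ((n : ℤ) + 2)| := by
        have h := norm_tsum_le_tsum_norm (f := fun n : ℕ => Taux ((n : ℤ) + 2))
          (by simpa [Real.norm_eq_abs] using Taux_tail_abs_summable)
        simpa [Real.norm_eq_abs] using h
    _ ≤ ∑' n : ℕ, (16 * Real.exp (-2) ^ 2) * Real.exp (-2) ^ n := by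
        apply Summable.tsum_le_tsum _ Taux_tail_abs_summable hsum
        intro n
        calc |Taux ((n : ℤ) + 2)| ≤ 16 * Real.exp (-2) ^ (n + 2) := Taux_bound n
          _ = (16 * Real.exp (-2) ^ 2) * Real.exp (-2) ^ n := by rw [pow_add]; ring
    _ = 16 * Real.exp (-2) ^ 2 * (1 - Real.exp (-2))⁻¹ := by
        rw [tsum_mul_left, tsum_geometric_of_lt_one hr0 hr1]

/-- The series `∑_(k∈ℤ) (−1)^k (1 − 2πk²) e^(−πk²/2)` converges absolutely and its sum is
strictly positive. -/
theorem sum_alt_pos :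
    Summable (fun k : ℤ =>
      |(-1 : ℝ) ^ k * (1 - 2 * Real.pi * (k : ℝ) ^ 2) * Real.exp (-Real.pi * (k : ℝ) ^ 2 / 2)|) ∧
    0 < ∑' k : ℤ,
        (-1 : ℝ) ^ k * (1 - 2 * Real.pi * (k : ℝ) ^ 2) * Real.exp (-Real.pi * (k : ℝ) ^ 2 / 2) := by
  constructor
  · exact Taux_abs_summable
  · show 0 < ∑' k : ℤ, Taux k
    rw [Taux_tsum_eq]
    have hr0 : (0:ℝ) < Real.exp (-2) := Real.exp_pos _
    have hr : Real.exp (-2) < 0.14 := by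
      rw [Real.exp_neg, inv_lt_comm₀ (by positivity) (by norm_num)]
      have h2 : Real.exp 2 = Real.exp 1 * Real.exp 1 := by rw [← Real.exp_add]; norm_num
      have := Real.exp_one_gt_d9
      nlinarith
    have hu : (1 - Real.exp (-2))⁻¹ ≤ (0.86 : ℝ)⁻¹ := by
      apply inv_anti₀ (by norm_num)
      linarith
    have htail := Taux_tail_bound
    have h1 := Taux_one_nonneg
    have habs := abs_le.mp htail
    have hb : 16 * Real.exp (-2) ^ 2 * (1 - Real.exp (-2))⁻¹ < 0.4 := by
      have h16 : 16 * Real.exp (-2) ^ 2 ≤ 16 * (0.14:ℝ)^2 := by nlinarith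
      have hupos : (0:ℝ) < (1 - Real.exp (-2))⁻¹ := by
        apply inv_pos.mpr; linarith
      calc 16 * Real.exp (-2) ^ 2 * (1 - Real.exp (-2))⁻¹
          ≤ 16 * (0.14:ℝ)^2 * (0.86:ℝ)⁻¹ := by
            apply mul_le_mul h16 hu hupos.le (by norm_num)
        _ < 0.4 := by norm_num
    nlinarith [habs.1]
end

section
/- There exists x₀ ∈ (0, 1/2) such that ∑_{k∈ℤ} (8π(k−x₀)² − 1)·e^{−2π(k−x₀)²} = 0. (Equivalently, the Zak transform of the dilated second Hermite function g(t) = (8πt² − 1)e^{−2πt²} vanishes at the point (x₀, 0).) -/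
open Real Set

noncomputable def zakTerm (k : ℤ) (x : ℝ) : ℝ :=
  (8 * Real.pi * ((k : ℝ) - x) ^ 2 - 1) * Real.exp (-2 * Real.pi * ((k : ℝ) - x) ^ 2)

noncomputable def zakF (x : ℝ) : ℝ := ∑' k : ℤ, zakTerm k x

/-- `y * exp (-y) ≤ exp (-1)` for `y ≥ 0` (actually all `y`). -/
lemma zak_aux_mul_exp_le (y : ℝ) : y * Real.exp (-y) ≤ Real.exp (-1) := by
  have h := Real.add_one_le_exp (y - 1)
  have h2 : y ≤ Real.exp (y - 1) := by linarith
  calc y * Real.exp (-y) ≤ Real.exp (y - 1) * Real.exp (-y) := by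
        apply mul_le_mul_of_nonneg_right h2 (Real.exp_pos _).le
    _ = Real.exp (-1) := by rw [← Real.exp_add]; ring_nf

/-- pointwise bound: `|zakTerm| ≤ 4 exp (-π t²)` with `t = k - x`. -/
lemma zakTerm_abs_le (k : ℤ) (x : ℝ) :
    |zakTerm k x| ≤ 4 * Real.exp (-Real.pi * ((k : ℝ) - x) ^ 2) := by
  set t2 : ℝ := ((k : ℝ) - x) ^ 2 with ht2
  have ht2nn : 0 ≤ t2 := sq_nonneg _
  have hpi := Real.pi_pos
  have hexp : Real.exp (-2 * Real.pi * t2) = Real.exp (-Real.pi * t2) * Real.exp (-Real.pi * t2) := by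
    rw [← Real.exp_add]; ring_nf
  have h1 : |zakTerm k x| ≤ (8 * Real.pi * t2 + 1) * Real.exp (-2 * Real.pi * t2) := by
    rw [zakTerm, abs_mul, Real.abs_exp]
    have : |8 * Real.pi * t2 - 1| ≤ 8 * Real.pi * t2 + 1 := by
      rw [abs_le]; constructor <;> nlinarith
    exact mul_le_mul_of_nonneg_right this (Real.exp_pos _).le
  have key : Real.pi * t2 * Real.exp (-(Real.pi * t2)) ≤ Real.exp (-1) :=
    zak_aux_mul_exp_le (Real.pi * t2)
  have hexp1 : Real.exp (-1) ≤ 3 / 8 := by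
    rw [Real.exp_neg]
    rw [inv_le_comm₀ (Real.exp_pos _) (by norm_num)]
    calc (3 / 8 : ℝ)⁻¹ = 8 / 3 := by norm_num
      _ ≤ 2.7182818283 := by norm_num
      _ ≤ Real.exp 1 := Real.exp_one_gt_d9.le
  have h2 : 8 * Real.pi * t2 * Real.exp (-2 * Real.pi * t2) ≤ 3 * Real.exp (-Real.pi * t2) := by
    rw [hexp]
    have : 8 * Real.pi * t2 * (Real.exp (-Real.pi * t2) * Real.exp (-Real.pi * t2))
        = 8 * (Real.pi * t2 * Real.exp (-(Real.pi * t2))) * Real.exp (-Real.pi * t2) := by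
      ring_nf
    rw [this]
    have h8 : 8 * (Real.pi * t2 * Real.exp (-(Real.pi * t2))) ≤ 3 := by
      nlinarith [Real.exp_pos (-(Real.pi * t2))]
    exact mul_le_mul_of_nonneg_right h8 (Real.exp_pos _).le
  have h3 : Real.exp (-2 * Real.pi * t2) ≤ Real.exp (-Real.pi * t2) := by
    apply Real.exp_le_exp.mpr; nlinarith
  calc |zakTerm k x| ≤ (8 * Real.pi * t2 + 1) * Real.exp (-2 * Real.pi * t2) := h1
    _ = 8 * Real.pi * t2 * Real.exp (-2 * Real.pi * t2) + Real.exp (-2 * Real.pi * t2) := by ring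
    _ ≤ 3 * Real.exp (-Real.pi * t2) + Real.exp (-Real.pi * t2) := add_le_add h2 h3
    _ = 4 * Real.exp (-Real.pi * t2) := by ring

/-- for `x ∈ [0, 1/2]`, `(k - x)² ≥ k² - |k|`. -/
lemma zak_sq_lower (k : ℤ) {x : ℝ} (hx : x ∈ Icc (0 : ℝ) (1 / 2)) :
    (k : ℝ) ^ 2 - |(k : ℝ)| ≤ ((k : ℝ) - x) ^ 2 := by
  obtain ⟨hx0, hx1⟩ := hx
  rcases le_total (0 : ℝ) (k : ℝ) with hk | hk
  · rw [abs_of_nonneg hk]; nlinarith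
  · rw [abs_of_nonpos hk]; nlinarith

noncomputable def zakBound (k : ℤ) : ℝ :=
  4 * Real.exp (2 * Real.pi) * Real.exp (-Real.pi * |(k : ℝ)|)

lemma zakTerm_le_bound (k : ℤ) {x : ℝ} (hx : x ∈ Icc (0 : ℝ) (1 / 2)) :
    |zakTerm k x| ≤ zakBound k := by
  have hpi := Real.pi_pos
  refine (zakTerm_abs_le k x).trans ?_
  rw [zakBound, mul_assoc, ← Real.exp_add]
  apply mul_le_mul_of_nonneg_left _ (by norm_num)
  apply Real.exp_le_exp.mpr
  have h1 := zak_sq_lower k hx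
  have h2 : |(k : ℝ)| - 2 ≤ (k : ℝ) ^ 2 - |(k : ℝ)| := by
    nlinarith [sq_nonneg (|(k : ℝ)| - 1), sq_abs (k : ℝ)]
  nlinarith

lemma zakBound_summable : Summable zakBound := by
  have hr : Real.exp (-Real.pi) < 1 := Real.exp_lt_one_iff.mpr (neg_lt_zero.mpr Real.pi_pos)
  have hr0 : 0 ≤ Real.exp (-Real.pi) := (Real.exp_pos _).le
  have hnat : Summable fun n : ℕ => Real.exp (-Real.pi * (n : ℝ)) := by
    have : (fun n : ℕ => Real.exp (-Real.pi * (n : ℝ)))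
        = fun n : ℕ => Real.exp (-Real.pi) ^ n := by
      funext n; rw [← Real.exp_nat_mul]; ring_nf
    rw [this]
    exact summable_geometric_of_lt_one hr0 hr
  have hbase : Summable fun k : ℤ => Real.exp (-Real.pi * |(k : ℝ)|) := by
    apply Summable.of_nat_of_neg_add_one
    · apply hnat.congr
      intro n
      simp [abs_of_nonneg (Nat.cast_nonneg n : (0:ℝ) ≤ (n:ℝ))]
    · apply (hnat.comp_injective (add_left_injective 1)).congr
      intro n
      have : |((-(↑n + 1) : ℤ) : ℝ)| = ((n : ℝ) + 1) := by
        push_cast; rw [abs_neg, abs_of_nonneg (by positivity)]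
      simp only [this]
      push_cast
      norm_num
  exact hbase.mul_left _

lemma zak_summable {x : ℝ} (hx : x ∈ Icc (0 : ℝ) (1 / 2)) :
    Summable fun k : ℤ => zakTerm k x := by
  apply Summable.of_norm_bounded zakBound_summable
  intro k
  rw [Real.norm_eq_abs]
  exact zakTerm_le_bound k hx

lemma zak_continuousOn : ContinuousOn zakF (Icc (0 : ℝ) (1 / 2)) := by
  apply continuousOn_tsum (u := zakBound)
  · intro k
    apply Continuous.continuousOn
    unfold zakTerm
    continuity
  · exact zakBound_summable
  · intro k x hx
    rw [Real.norm_eq_abs]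
    exact zakTerm_le_bound k hx

lemma zakF_half_pos : 0 < zakF (1 / 2) := by
  have hpi := Real.pi_gt_three
  have hterm_nonneg : ∀ k : ℤ, 0 ≤ zakTerm k (1 / 2) := by
    intro k
    have hq : (1 / 4 : ℝ) ≤ ((k : ℝ) - 1 / 2) ^ 2 := by
      rcases Int.lt_or_le k 1 with hk | hk
      · have : (k : ℝ) ≤ 0 := by exact_mod_cast Int.lt_add_one_iff.mp hk
        nlinarith
      · have : (1 : ℝ) ≤ (k : ℝ) := by exact_mod_cast hk
        nlinarith
    have : 0 ≤ 8 * Real.pi * ((k : ℝ) - 1 / 2) ^ 2 - 1 := by nlinarith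
    exact mul_nonneg this (Real.exp_pos _).le
  apply Summable.tsum_pos (zak_summable (by norm_num : (1/2:ℝ) ∈ Icc (0:ℝ) (1/2))) hterm_nonneg 0
  have : ((0 : ℤ) : ℝ) - 1 / 2 = -(1 / 2) := by norm_num
  rw [zakTerm, this]
  have h : (0:ℝ) < 8 * Real.pi * (-(1/2) : ℝ) ^ 2 - 1 := by nlinarith
  positivity

lemma zakTerm_nat_succ_le (n : ℕ) :
    zakTerm ((n : ℤ) + 1) 0 ≤ 8 * Real.pi * Real.exp (-4) * Real.exp (-4) ^ n := by
  have hpi := Real.pi_gt_three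
  set a : ℝ := (n : ℝ) + 1 with ha
  have ha1 : (1 : ℝ) ≤ a := by rw [ha]; have := Nat.cast_nonneg (α := ℝ) n; linarith
  have hcast : (((n : ℤ) + 1 : ℤ) : ℝ) - 0 = a := by push_cast; ring
  rw [zakTerm, hcast]
  have hgeom : 8 * Real.pi * Real.exp (-4) * Real.exp (-4) ^ n = 8 * Real.pi * Real.exp (-4 * a) := by
    rw [mul_assoc, ← Real.exp_nat_mul, ← Real.exp_add]; rw [ha]; ring_nf
  rw [hgeom]
  have h1 : (8 * Real.pi * a ^ 2 - 1) * Real.exp (-2 * Real.pi * a ^ 2)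
      ≤ 8 * Real.pi * a ^ 2 * Real.exp (-2 * Real.pi * a ^ 2) := by
    apply mul_le_mul_of_nonneg_right _ (Real.exp_pos _).le
    nlinarith
  have hsq : a ^ 2 ≤ Real.exp (2 * a) := by
    have := Real.add_one_le_exp a
    have h2 : a ≤ Real.exp a := by linarith
    have : a ^ 2 ≤ (Real.exp a) ^ 2 := by nlinarith [Real.exp_pos a]
    calc a ^ 2 ≤ (Real.exp a) ^ 2 := this
      _ = Real.exp (2 * a) := by rw [← Real.exp_nat_mul]; norm_num
  have h2 : 8 * Real.pi * a ^ 2 * Real.exp (-2 * Real.pi * a ^ 2)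
      ≤ 8 * Real.pi * (Real.exp (2 * a) * Real.exp (-2 * Real.pi * a ^ 2)) := by
    rw [mul_assoc]
    apply mul_le_mul_of_nonneg_left _ (by positivity)
    exact mul_le_mul_of_nonneg_right hsq (Real.exp_pos _).le
  have h3 : Real.exp (2 * a) * Real.exp (-2 * Real.pi * a ^ 2) ≤ Real.exp (-4 * a) := by
    rw [← Real.exp_add]
    apply Real.exp_le_exp.mpr
    nlinarith
  calc (8 * Real.pi * a ^ 2 - 1) * Real.exp (-2 * Real.pi * a ^ 2)
      ≤ 8 * Real.pi * a ^ 2 * Real.exp (-2 * Real.pi * a ^ 2) := h1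
    _ ≤ 8 * Real.pi * (Real.exp (2 * a) * Real.exp (-2 * Real.pi * a ^ 2)) := h2
    _ ≤ 8 * Real.pi * Real.exp (-4 * a) := by
        apply mul_le_mul_of_nonneg_left h3 (by positivity)

lemma zakF_zero_neg : zakF 0 < 0 := by
  have h0mem : (0 : ℝ) ∈ Icc (0 : ℝ) (1 / 2) := by norm_num
  have hs : Summable fun k : ℤ => zakTerm k 0 := zak_summable h0mem
  have hs1 : Summable fun n : ℕ => zakTerm (n : ℤ) 0 :=
    hs.comp_injective (fun a b h => by exact_mod_cast h)
  have hs2 : Summable fun n : ℕ => zakTerm (-((n : ℤ) + 1)) 0 :=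
    hs.comp_injective (fun a b h => by omega)
  have hneg_eq : ∀ n : ℕ, zakTerm (-((n : ℤ) + 1)) 0 = zakTerm ((n : ℤ) + 1) 0 := by
    intro n
    unfold zakTerm
    push_cast
    ring_nf
  have hsplit : zakF 0 = (∑' n : ℕ, zakTerm (n : ℤ) 0) + ∑' n : ℕ, zakTerm (-((n : ℤ) + 1)) 0 :=
    tsum_of_nat_of_neg_add_one hs1 hs2
  have hs1' : Summable fun n : ℕ => zakTerm ((n : ℤ) + 1) 0 := by
    apply hs2.congr; intro n; exact (hneg_eq n)
  have hfirst : (∑' n : ℕ, zakTerm (n : ℤ) 0)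
      = zakTerm 0 0 + ∑' n : ℕ, zakTerm ((n : ℤ) + 1) 0 := by
    rw [Summable.tsum_eq_zero_add hs1]
    have e1 : zakTerm (((0:ℕ):ℤ)) 0 = zakTerm 0 0 := by norm_num
    rw [e1]
    congr 1
  have hnegsum : (∑' n : ℕ, zakTerm (-((n : ℤ) + 1)) 0) = ∑' n : ℕ, zakTerm ((n : ℤ) + 1) 0 :=
    tsum_congr hneg_eq
  have hzero : zakTerm 0 0 = -1 := by
    unfold zakTerm; norm_num
  -- bound the tail sum
  have hr : Real.exp (-4 : ℝ) < 1 := Real.exp_lt_one_iff.mpr (by norm_num)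
  have hr0 : (0:ℝ) ≤ Real.exp (-4 : ℝ) := (Real.exp_pos _).le
  have hgs : Summable fun n : ℕ => 8 * Real.pi * Real.exp (-4) * Real.exp (-4) ^ n :=
    (summable_geometric_of_lt_one hr0 hr).mul_left _
  have htail : (∑' n : ℕ, zakTerm ((n : ℤ) + 1) 0)
      ≤ ∑' n : ℕ, 8 * Real.pi * Real.exp (-4) * Real.exp (-4) ^ n :=
    Summable.tsum_le_tsum (fun n => zakTerm_nat_succ_le n) hs1' hgs
  have hgeomsum : (∑' n : ℕ, 8 * Real.pi * Real.exp (-4) * Real.exp (-4) ^ n)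
      = 8 * Real.pi * Real.exp (-4) * (1 - Real.exp (-4))⁻¹ := by
    rw [tsum_mul_left, tsum_geometric_of_lt_one hr0 hr]
  -- numeric bound
  have h54 : (54 : ℝ) < Real.exp 4 := by
    have h1 : (2.7182818283 : ℝ) < Real.exp 1 := Real.exp_one_gt_d9
    have h4 : (Real.exp 1) ^ (4:ℕ) = Real.exp 4 := by
      rw [← Real.exp_nat_mul]; norm_num
    have h2 : (2.7182818283 : ℝ) ^ (4:ℕ) < (Real.exp 1) ^ (4:ℕ) :=
      pow_lt_pow_left₀ h1 (by norm_num) (by norm_num)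
    rw [h4] at h2
    nlinarith
  have hebound : Real.exp (-4 : ℝ) < 1 / 54 := by
    rw [Real.exp_neg]
    rw [show (1:ℝ)/54 = ((54:ℝ))⁻¹ by norm_num]
    exact inv_strictAnti₀ (by norm_num) h54
  have hpi : Real.pi < 3.15 := by
    have := Real.pi_lt_d2
    linarith
  have hfinal : 8 * Real.pi * Real.exp (-4) * (1 - Real.exp (-4))⁻¹ < 1 / 2 := by
    have hd : (0:ℝ) < 1 - Real.exp (-4) := by linarith
    have hinv : (1 - Real.exp (-4))⁻¹ ≤ (53/54 : ℝ)⁻¹ := by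
      apply inv_anti₀ (by norm_num)
      linarith
    have hpipos := Real.pi_pos
    have he0 : (0:ℝ) < Real.exp (-4) := Real.exp_pos _
    calc 8 * Real.pi * Real.exp (-4) * (1 - Real.exp (-4))⁻¹
        ≤ 8 * Real.pi * Real.exp (-4) * (53/54 : ℝ)⁻¹ := by
          apply mul_le_mul_of_nonneg_left hinv (by positivity)
      _ < 1 / 2 := by nlinarith
  rw [hsplit, hfirst, hnegsum, hzero]
  have : (∑' n : ℕ, zakTerm ((n : ℤ) + 1) 0) < 1 / 2 := lt_of_le_of_lt (htail.trans_eq hgeomsum) hfinal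
  linarith

/-- There exists `x₀ ∈ (0, 1/2)` with `∑_(k∈ℤ) (8π(k−x₀)² − 1) e^(−2π(k−x₀)²) = 0`, i.e. the
Zak transform of the dilated second Hermite function `g(t) = (8πt² − 1)e^(−2πt²)` vanishes at
`(x₀, 0)`. -/
theorem exists_zero_of_zak_dilated_h2 :
    ∃ x₀ ∈ Set.Ioo (0 : ℝ) (1 / 2),
      ∑' k : ℤ, (8 * Real.pi * ((k : ℝ) - x₀) ^ 2 - 1) *
        Real.exp (-2 * Real.pi * ((k : ℝ) - x₀) ^ 2) = 0 := by
  have h := intermediate_value_Ioo (by norm_num : (0:ℝ) ≤ 1/2) zak_continuousOn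
  have h0 : (0 : ℝ) ∈ Ioo (zakF 0) (zakF (1/2)) := ⟨zakF_zero_neg, zakF_half_pos⟩
  obtain ⟨x₀, hx₀, hfx₀⟩ := h h0
  exact ⟨x₀, hx₀, hfx₀⟩
end
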